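/- arXiv:1806.07828 — 13 statements merged into one kernel-verified Lean document; each statement's English description precedes it below -/
import Mathlib

section
/- Let u = x_{i_1}···x_{i_d} be a t-spread monomial. A t-spread monomial x_{j_1}···x_{j_d} (with j_1 < j_2 < ··· < j_d, j_k - j_{k-1} ≥ t) is a minimal generator of B_t(u) if and only if j_k ≤ i_k for all 1 ≤ k ≤ d. -/
/-!
STATEMENT 1: A `t`-spread monomial `x_{j_1} ⋯ x_{j_d}` is a minimal generator of
the `t`-spread principal Borel ideal `B_t(u)`, `u = x_{i_1} ⋯ x_{i_d}`, if and
only if `j_k ≤ i_k` for all `k`.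

Monomials are modeled as sequences `a : ℕ → ℕ` (entries `a 1, …, a d`), being
`t`-spread means all entries are ≥ 1 and consecutive gaps are ≥ `t`.
`B_t(u)` is modeled as the closure of `u` under the Borel moves "decrease one
entry while staying `t`-spread".
-/

/-- `a` (with entries `a 1, …, a d`) is a `t`-spread sequence of variable
indices: all entries are positive and consecutive gaps are at least `t`. -/
def IsTSpread (t d : ℕ) (a : ℕ → ℕ) : Prop :=
  (∀ l, 1 ≤ l → l ≤ d → 1 ≤ a l) ∧ ∀ l, 2 ≤ l → l ≤ d → a (l - 1) + t ≤ a l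

/-- One Borel move: decrease a single entry (in position `k ∈ [1, d]`) of the
`t`-spread sequence `a`, the result `b` being again `t`-spread. -/
def BorelStep (t d : ℕ) (a b : ℕ → ℕ) : Prop :=
  IsTSpread t d b ∧ ∃ k, 1 ≤ k ∧ k ≤ d ∧ b k < a k ∧ ∀ l, l ≠ k → b l = a l

private lemma borel_build (t d : ℕ) :
    ∀ n (i : ℕ → ℕ), IsTSpread t d i → ∀ b : ℕ → ℕ, IsTSpread t d b →
      (∀ k, 1 ≤ k → k ≤ d → b k ≤ i k) → (∀ l, l = 0 ∨ d < l → b l = i l) →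
      ((Finset.Icc 1 d).filter (fun k => b k < i k)).card = n →
      Relation.ReflTransGen (BorelStep t d) i b := by
  intro n
  induction n with
  | zero =>
    intro i hi b hb hle heq hcard
    have hbi : b = i := by
      funext l
      rcases le_or_gt l d with hld | hld
      · rcases Nat.eq_zero_or_pos l with h0 | h1
        · exact heq l (Or.inl h0)
        · have hmem : l ∈ Finset.Icc 1 d := Finset.mem_Icc.mpr ⟨h1, hld⟩
          have : ¬ b l < i l := by
            intro h
            have : l ∈ (Finset.Icc 1 d).filter (fun k => b k < i k) :=
              Finset.mem_filter.mpr ⟨hmem, h⟩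
            simp [Finset.card_eq_zero.mp hcard] at this
          exact le_antisymm (hle l h1 hld) (not_lt.mp this)
      · exact heq l (Or.inr hld)
    rw [hbi]
  | succ n ih =>
    intro i hi b hb hle heq hcard
    set S := (Finset.Icc 1 d).filter (fun k => b k < i k) with hS
    have hSne : S.Nonempty := Finset.card_pos.mp (by omega)
    set k := S.min' hSne with hk
    have hkS : k ∈ S := S.min'_mem hSne
    have hkmin : ∀ j ∈ S, k ≤ j := fun j hj => S.min'_le j hj
    obtain ⟨hkIcc, hklt⟩ := Finset.mem_filter.mp hkS
    obtain ⟨hk1, hkd⟩ := Finset.mem_Icc.mp hkIcc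
    set c := Function.update i k (b k) with hc
    have hck : c k = b k := Function.update_self k (b k) i
    have hcl : ∀ l, l ≠ k → c l = i l := fun l hl => Function.update_of_ne hl _ _
    -- key: positions before k agree with i
    have hbefore : ∀ l, 1 ≤ l → l < k → b l = i l := by
      intro l h1 hlk
      by_contra h
      have hlt : b l < i l := lt_of_le_of_ne (hle l h1 (le_trans hlk.le hkd)) h
      have : l ∈ S := Finset.mem_filter.mpr ⟨Finset.mem_Icc.mpr ⟨h1, le_trans hlk.le hkd⟩, hlt⟩
      exact absurd (hkmin l this) (not_le.mpr hlk)
    have hcspread : IsTSpread t d c := by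
      constructor
      · intro l h1 hld
        rcases eq_or_ne l k with rfl | hne
        · rw [hck]; exact hb.1 k h1 hld
        · rw [hcl l hne]; exact hi.1 l h1 hld
      · intro l h2 hld
        rcases eq_or_ne l k with rfl | hne
        · -- gap at k: c (k-1) + t ≤ c k, i.e. i (k-1) + t ≤ b k
          have hne' : k - 1 ≠ k := by omega
          rw [hcl (k - 1) hne', hck]
          have hb1 : b (k - 1) = i (k - 1) := hbefore (k - 1) (by omega) (by omega)
          have := hb.2 k h2 hld
          omega
        · rcases eq_or_ne (l - 1) k with hek | hne'
          · -- gap at k+1: b k + t ≤ i l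
            rw [hcl l hne, hek, hck]
            have := hi.2 l h2 hld
            rw [hek] at this
            omega
          · rw [hcl l hne, hcl (l - 1) hne']
            exact hi.2 l h2 hld
    have hstep : BorelStep t d i c :=
      ⟨hcspread, k, hk1, hkd, by rw [hck]; exact hklt, hcl⟩
    have hrest : Relation.ReflTransGen (BorelStep t d) c b := by
      apply ih c hcspread b hb
      · intro l h1 hld
        rcases eq_or_ne l k with rfl | hne
        · rw [hck]
        · rw [hcl l hne]; exact hle l h1 hld
      · intro l hl
        have hne : l ≠ k := by rcases hl with h | h <;> omega
        rw [hcl l hne]; exact heq l hl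
      · have : (Finset.Icc 1 d).filter (fun j => b j < c j) = S.erase k := by
          ext l
          simp only [Finset.mem_filter, Finset.mem_erase, hS, Finset.mem_filter]
          constructor
          · rintro ⟨hl, hlt⟩
            rcases eq_or_ne l k with rfl | hne
            · rw [hck] at hlt; omega
            · rw [hcl l hne] at hlt; exact ⟨hne, hl, hlt⟩
          · rintro ⟨hne, hl, hlt⟩
            rw [hcl l hne]; exact ⟨hl, hlt⟩
        rw [this, Finset.card_erase_of_mem hkS]
        omega
    exact Relation.ReflTransGen.head hstep hrest

theorem mem_tSpread_principal_Borel_iff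
    (t d : ℕ) (ht : 1 ≤ t) (i : ℕ → ℕ) (hi : IsTSpread t d i) (b : ℕ → ℕ) :
    Relation.ReflTransGen (BorelStep t d) i b ↔
      (IsTSpread t d b ∧ (∀ k, 1 ≤ k → k ≤ d → b k ≤ i k) ∧
        ∀ l, l = 0 ∨ d < l → b l = i l) := by
  constructor
  · intro h
    induction h with
    | refl => exact ⟨hi, fun k _ _ => le_refl _, fun l _ => rfl⟩
    | tail hab hstep ih =>
      rename_i a c
      obtain ⟨hcs, k, hk1, hkd, hlt, hrest⟩ := hstep
      obtain ⟨has, hale, haeq⟩ := ih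
      refine ⟨hcs, ?_, ?_⟩
      · intro j h1 hjd
        rcases eq_or_ne j k with rfl | hne
        · exact le_trans hlt.le (hale j h1 hjd)
        · rw [hrest j hne]; exact hale j h1 hjd
      · intro l hl
        have hne : l ≠ k := by rcases hl with h | h <;> omega
        rw [hrest l hne]; exact haeq l hl
  · rintro ⟨hb, hle, heq⟩
    exact borel_build t d _ i hi b hb hle heq rfl
end

section
/- The sorting operator preserves the set of minimal generators of a t-spread principal Borel ideal: if v, w are minimal generators of B_t(u) and (v', w') = sort(v, w), then v' and w' are minimal generators of B_t(u). -/
/-- `a` encodes a minimal generator of `B_t(u)` where `u` is encoded by `i`. -/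
def IsGen (t d : ℕ) (i a : ℕ → ℕ) : Prop :=
  IsTSpread t d a ∧ ∀ l, 1 ≤ l → l ≤ d → a l ≤ i l

theorem sorting_preserves_generators
    (t d : ℕ) (ht : 1 ≤ t) (i : ℕ → ℕ) (hi : IsTSpread t d i)
    (a b c : ℕ → ℕ)
    (ha : IsGen t d i a) (hb : IsGen t d i b)
    (hmono : ∀ l, 2 ≤ l → l ≤ 2 * d → c (l - 1) ≤ c l)
    (hperm : (Finset.Icc 1 (2 * d)).val.map c =
      (Finset.Icc 1 d).val.map a + (Finset.Icc 1 d).val.map b) :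
    IsGen t d i (fun l => c (2 * l - 1)) ∧ IsGen t d i (fun l => c (2 * l)) := by
  obtain ⟨⟨ha1, haS⟩, haB⟩ := ha
  obtain ⟨⟨hb1, hbS⟩, hbB⟩ := hb
  -- monotonicity of `c` on `[1, 2d]`
  have cmono : ∀ m n, 1 ≤ m → m ≤ n → n ≤ 2 * d → c m ≤ c n := by
    intro m n hm hmn hn
    induction n with
    | zero => omega
    | succ k ih =>
      rcases Nat.lt_or_ge m (k + 1) with h | h
      · have h1 : c m ≤ c k := ih (by omega) (by omega)
        have h2 : c ((k + 1) - 1) ≤ c (k + 1) := hmono (k + 1) (by omega) hn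
        simpa using le_trans h1 h2
      · have : m = k + 1 := by omega
        subst this; exact le_rfl
  -- strict step of `a` and `b`
  have step : ∀ (f : ℕ → ℕ), (∀ l, 2 ≤ l → l ≤ d → f (l - 1) + t ≤ f l) →
      ∀ m n, 1 ≤ m → m < n → n ≤ d → f m + t ≤ f n := by
    intro f hf m n hm
    induction n with
    | zero => omega
    | succ k ih =>
      intro hmn hn
      rcases Nat.lt_or_ge m k with h | h
      · have h1 : f m + t ≤ f k := ih (by omega) (by omega)
        have h2 : f ((k + 1) - 1) + t ≤ f (k + 1) := hf (k + 1) (by omega) hn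
        simp only [Nat.add_sub_cancel] at h2
        omega
      · have h2 : f ((k + 1) - 1) + t ≤ f (k + 1) := hf (k + 1) (by omega) hn
        simp only [Nat.add_sub_cancel] at h2
        have hmk : m = k := by omega
        rw [hmk]
        exact h2
  have astep := step a haS
  have bstep := step b hbS
  have amono : ∀ m n, 1 ≤ m → m ≤ n → n ≤ d → a m ≤ a n := by
    intro m n hm hmn hn
    rcases Nat.lt_or_ge m n with h | h
    · have := astep m n hm h hn; omega
    · have : m = n := by omega
      subst this; exact le_rfl
  have bmono : ∀ m n, 1 ≤ m → m ≤ n → n ≤ d → b m ≤ b n := by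
    intro m n hm hmn hn
    rcases Nat.lt_or_ge m n with h | h
    · have := bstep m n hm h hn; omega
    · have : m = n := by omega
      subst this; exact le_rfl
  -- counting lemma coming from the multiset equality
  have hcount : ∀ (p : ℕ → Prop) [DecidablePred p],
      ((Finset.Icc 1 (2 * d)).filter (fun n => p (c n))).card =
      ((Finset.Icc 1 d).filter (fun n => p (a n))).card +
      ((Finset.Icc 1 d).filter (fun n => p (b n))).card := by
    intro p hp
    have h := congrArg (Multiset.countP p) hperm
    rw [Multiset.countP_add, Multiset.countP_map, Multiset.countP_map,
      Multiset.countP_map] at h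
    simpa [Finset.card, Finset.filter_val] using h
  -- every value of `c` on `[1, 2d]` is a value of `a` or `b`, hence positive
  have hpos : ∀ n, 1 ≤ n → n ≤ 2 * d → 1 ≤ c n := by
    intro n h1 h2
    have hm : c n ∈ (Finset.Icc 1 (2 * d)).val.map c :=
      Multiset.mem_map_of_mem c (by simp; omega)
    rw [hperm] at hm
    rcases Multiset.mem_add.mp hm with hm | hm
    · obtain ⟨l, hl, hle⟩ := Multiset.mem_map.mp hm
      simp only [Finset.mem_val, Finset.mem_Icc] at hl
      rw [← hle]; exact ha1 l hl.1 hl.2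
    · obtain ⟨l, hl, hle⟩ := Multiset.mem_map.mp hm
      simp only [Finset.mem_val, Finset.mem_Icc] at hl
      rw [← hle]; exact hb1 l hl.1 hl.2
  -- upper bound: `c (2l) ≤ i l`
  have hub : ∀ l, 1 ≤ l → l ≤ d → c (2 * l) ≤ i l := by
    intro l h1 h2
    by_contra hcon
    push_neg at hcon
    have hkey := hcount (fun v => v ≤ i l)
    have hL : ((Finset.Icc 1 (2 * d)).filter (fun n => c n ≤ i l)).card ≤ 2 * l - 1 := by
      have hsub : (Finset.Icc 1 (2 * d)).filter (fun n => c n ≤ i l) ⊆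
          Finset.Icc 1 (2 * l - 1) := by
        intro n hn
        simp only [Finset.mem_filter, Finset.mem_Icc] at hn ⊢
        refine ⟨hn.1.1, ?_⟩
        by_contra hn2
        push_neg at hn2
        have : c (2 * l) ≤ c n := cmono (2 * l) n (by omega) (by omega) hn.1.2
        omega
      calc _ ≤ (Finset.Icc 1 (2 * l - 1)).card := Finset.card_le_card hsub
        _ = 2 * l - 1 := by rw [Nat.card_Icc]; omega
    have hA : l ≤ ((Finset.Icc 1 d).filter (fun n => a n ≤ i l)).card := by
      have hsub : Finset.Icc 1 l ⊆ (Finset.Icc 1 d).filter (fun n => a n ≤ i l) := by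
        intro j hj
        simp only [Finset.mem_Icc] at hj
        simp only [Finset.mem_filter, Finset.mem_Icc]
        exact ⟨⟨hj.1, by omega⟩, le_trans (amono j l hj.1 hj.2 h2) (haB l h1 h2)⟩
      calc l = (Finset.Icc 1 l).card := by rw [Nat.card_Icc]; omega
        _ ≤ _ := Finset.card_le_card hsub
    have hB : l ≤ ((Finset.Icc 1 d).filter (fun n => b n ≤ i l)).card := by
      have hsub : Finset.Icc 1 l ⊆ (Finset.Icc 1 d).filter (fun n => b n ≤ i l) := by
        intro j hj
        simp only [Finset.mem_Icc] at hj
        simp only [Finset.mem_filter, Finset.mem_Icc]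
        exact ⟨⟨hj.1, by omega⟩, le_trans (bmono j l hj.1 hj.2 h2) (hbB l h1 h2)⟩
      calc l = (Finset.Icc 1 l).card := by rw [Nat.card_Icc]; omega
        _ ≤ _ := Finset.card_le_card hsub
    omega
  -- gap: `c m + t ≤ c (m + 2)`
  have hgap : ∀ m, 1 ≤ m → m + 2 ≤ 2 * d → c m + t ≤ c (m + 2) := by
    intro m h1 h2
    by_contra hcon
    push_neg at hcon
    have hkey := hcount (fun v => c m ≤ v ∧ v < c m + t)
    have hL : 3 ≤ ((Finset.Icc 1 (2 * d)).filter
        (fun n => c m ≤ c n ∧ c n < c m + t)).card := by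
      have hsub : Finset.Icc m (m + 2) ⊆
          (Finset.Icc 1 (2 * d)).filter (fun n => c m ≤ c n ∧ c n < c m + t) := by
        intro n hn
        simp only [Finset.mem_Icc] at hn
        simp only [Finset.mem_filter, Finset.mem_Icc]
        refine ⟨⟨by omega, by omega⟩, cmono m n h1 hn.1 (by omega), ?_⟩
        have : c n ≤ c (m + 2) := cmono n (m + 2) (by omega) hn.2 h2
        omega
      calc 3 = (Finset.Icc m (m + 2)).card := by rw [Nat.card_Icc]; omega
        _ ≤ _ := Finset.card_le_card hsub
    have hW : ∀ (f : ℕ → ℕ), (∀ m n, 1 ≤ m → m < n → n ≤ d → f m + t ≤ f n) →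
        ((Finset.Icc 1 d).filter (fun n => c m ≤ f n ∧ f n < c m + t)).card ≤ 1 := by
      intro f hf
      refine Finset.card_le_one.mpr ?_
      intro x hx y hy
      simp only [Finset.mem_filter, Finset.mem_Icc] at hx hy
      rcases lt_trichotomy x y with h | h | h
      · have := hf x y hx.1.1 h hy.1.2; omega
      · exact h
      · have := hf y x hy.1.1 h hx.1.2; omega
    have hA := hW a astep
    have hB := hW b bstep
    omega
  constructor
  · refine ⟨⟨?_, ?_⟩, ?_⟩
    · intro l h1 h2
      exact hpos (2 * l - 1) (by omega) (by omega)
    · intro l h1 h2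
      show c (2 * (l - 1) - 1) + t ≤ c (2 * l - 1)
      have e1 : 2 * (l - 1) - 1 = 2 * l - 3 := by omega
      have e2 : 2 * l - 1 = (2 * l - 3) + 2 := by omega
      rw [e1, e2]
      exact hgap (2 * l - 3) (by omega) (by omega)
    · intro l h1 h2
      show c (2 * l - 1) ≤ i l
      have h3 : c (2 * l - 1) ≤ c (2 * l) := cmono (2 * l - 1) (2 * l) (by omega) (by omega) (by omega)
      exact le_trans h3 (hub l h1 h2)
  · refine ⟨⟨?_, ?_⟩, ?_⟩
    · intro l h1 h2
      exact hpos (2 * l) (by omega) (by omega)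
    · intro l h1 h2
      show c (2 * (l - 1)) + t ≤ c (2 * l)
      have e1 : 2 * (l - 1) = 2 * l - 2 := by omega
      have e2 : 2 * l = (2 * l - 2) + 2 := by omega
      rw [e1, e2]
      exact hgap (2 * l - 2) (by omega) (by omega)
    · intro l h1 h2
      exact hub l h1 h2
end

section
/- The sorting of a pair of t-spread monomials is again a pair of t-spread monomials: if (a_1 < ··· < a_d) and (b_1 < ··· < b_d) both have consecutive gaps ≥ t, and c_1 ≤ c_2 ≤ ··· ≤ c_{2d} is the merged sorted sequence, then (c_1, c_3, ..., c_{2d-1}) and (c_2, c_4, ..., c_{2d}) both have consecutive gaps ≥ t. -/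
theorem sort_of_tSpread_pair_is_tSpread
    (t d : ℕ) (a b c : ℕ → ℕ)
    (ha : IsTSpread t d a) (hb : IsTSpread t d b)
    (hmono : ∀ l, 2 ≤ l → l ≤ 2 * d → c (l - 1) ≤ c l)
    (hperm : (Finset.Icc 1 (2 * d)).val.map c =
      (Finset.Icc 1 d).val.map a + (Finset.Icc 1 d).val.map b) :
    IsTSpread t d (fun l => c (2 * l - 1)) ∧ IsTSpread t d (fun l => c (2 * l)) := by
  -- monotone chain for c
  have hmono' : ∀ j k, 1 ≤ j → j ≤ k → k ≤ 2 * d → c j ≤ c k := by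
    intro j k hj hjk hk
    induction k with
    | zero => omega
    | succ k ih =>
      rcases Nat.lt_or_ge j (k + 1) with h | h
      · have h1 : c j ≤ c k := ih (by omega) (by omega)
        have h2 : c k ≤ c (k + 1) := by
          have := hmono (k + 1) (by omega) (by omega)
          simpa using this
        omega
      · have : j = k + 1 := by omega
        subst this; exact le_refl _
  -- spread chain
  have hchain : ∀ (f : ℕ → ℕ), (∀ l, 2 ≤ l → l ≤ d → f (l - 1) + t ≤ f l) →
      ∀ i i', 1 ≤ i → i < i' → i' ≤ d → f i + t ≤ f i' := by
    intro f hf i i' hi hii' hi'd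
    induction i' with
    | zero => omega
    | succ k ih =>
      rcases Nat.lt_or_ge i k with h | h
      · have h1 : f i + t ≤ f k := ih h (by omega)
        have h2 : f k + t ≤ f (k + 1) := by
          have := hf (k + 1) (by omega) (by omega); simpa using this
        omega
      · have : i = k := by omega
        subst this
        have := hf (i + 1) (by omega) (by omega); simpa using this
  -- c is positive on the range
  have hpos : ∀ l, 1 ≤ l → l ≤ 2 * d → 1 ≤ c l := by
    intro l h1 h2
    have hmem : c l ∈ (Finset.Icc 1 (2 * d)).val.map c := by
      apply Multiset.mem_map_of_mem
      rw [Finset.mem_val, Finset.mem_Icc]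
      omega
    rw [hperm, Multiset.mem_add] at hmem
    rcases hmem with hmem | hmem
    · obtain ⟨j, hj, hje⟩ := Multiset.mem_map.mp hmem
      rw [Finset.mem_val, Finset.mem_Icc] at hj
      have := ha.1 j hj.1 hj.2
      omega
    · obtain ⟨j, hj, hje⟩ := Multiset.mem_map.mp hmem
      rw [Finset.mem_val, Finset.mem_Icc] at hj
      have := hb.1 j hj.1 hj.2
      omega
  -- counting identity
  have count_eq : ∀ x : ℕ,
      ((Finset.Icc 1 (2 * d)).filter (fun j => c j ≤ x)).card
        = ((Finset.Icc 1 d).filter (fun j => a j ≤ x)).card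
          + ((Finset.Icc 1 d).filter (fun j => b j ≤ x)).card := by
    intro x
    have h := congrArg (Multiset.countP (fun v => v ≤ x)) hperm
    rw [Multiset.countP_add, Multiset.countP_map, Multiset.countP_map,
      Multiset.countP_map] at h
    exact h
  -- at most one value of a t-spread sequence in (y, y+t]
  have hstep : ∀ (f : ℕ → ℕ), (∀ l, 2 ≤ l → l ≤ d → f (l - 1) + t ≤ f l) → ∀ y : ℕ,
      ((Finset.Icc 1 d).filter (fun j => f j ≤ y + t)).card
        ≤ ((Finset.Icc 1 d).filter (fun j => f j ≤ y)).card + 1 := by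
    intro f hf y
    set S := (Finset.Icc 1 d).filter (fun j => f j ≤ y + t) with hS
    set T := (Finset.Icc 1 d).filter (fun j => f j ≤ y) with hT
    have hsd : (S \ T).card ≤ 1 := by
      apply Finset.card_le_one.mpr
      intro i hi j hj
      simp only [hS, hT, Finset.mem_sdiff, Finset.mem_filter, Finset.mem_Icc, not_and,
        not_le] at hi hj
      rcases lt_trichotomy i j with h | h | h
      · have := hchain f hf i j hi.1.1.1 h hj.1.1.2
        have h1 := hi.2 hi.1.1
        have h2 := hj.1.2
        omega
      · exact h
      · have := hchain f hf j i hj.1.1.1 h hi.1.1.2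
        have h1 := hj.2 hj.1.1
        have h2 := hi.1.2
        omega
    have hsub : T ⊆ S := by
      intro i hi
      simp only [hS, hT, Finset.mem_filter, Finset.mem_Icc] at hi ⊢
      omega
    calc S.card ≤ (S \ T).card + T.card := Finset.card_le_card_sdiff_add_card
      _ ≤ T.card + 1 := by omega
  -- key inequality: c k + t ≤ c (k+2)
  have key : ∀ k, 1 ≤ k → k + 2 ≤ 2 * d → c k + t ≤ c (k + 2) := by
    intro k hk hk2
    by_contra hcon
    push_neg at hcon
    have hcy : 1 ≤ c k := hpos k hk (by omega)
    set y : ℕ := c k - 1 with hy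
    -- N(y) ≤ k - 1
    have hNy : ((Finset.Icc 1 (2 * d)).filter (fun j => c j ≤ y)).card ≤ k - 1 := by
      have hsub : (Finset.Icc 1 (2 * d)).filter (fun j => c j ≤ y) ⊆ Finset.Icc 1 (k - 1) := by
        intro j hj
        simp only [Finset.mem_filter, Finset.mem_Icc] at hj ⊢
        refine ⟨hj.1.1, ?_⟩
        by_contra hjk
        have hkj : k ≤ j := by omega
        have := hmono' k j hk hkj hj.1.2
        omega
      calc _ ≤ (Finset.Icc 1 (k - 1)).card := Finset.card_le_card hsub
        _ = k - 1 := by rw [Nat.card_Icc]; omega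
    -- N(y+t) ≥ k + 2
    have hNyt : k + 2 ≤ ((Finset.Icc 1 (2 * d)).filter (fun j => c j ≤ y + t)).card := by
      have hsub : Finset.Icc 1 (k + 2) ⊆
          (Finset.Icc 1 (2 * d)).filter (fun j => c j ≤ y + t) := by
        intro j hj
        rw [Finset.mem_Icc] at hj
        simp only [Finset.mem_filter, Finset.mem_Icc]
        refine ⟨⟨hj.1, by omega⟩, ?_⟩
        have h1 : c j ≤ c (k + 2) := hmono' j (k + 2) hj.1 hj.2 hk2
        omega
      calc k + 2 = (Finset.Icc 1 (k + 2)).card := by rw [Nat.card_Icc]; omega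
        _ ≤ _ := Finset.card_le_card hsub
    have e1 := count_eq y
    have e2 := count_eq (y + t)
    have sa := hstep a ha.2 y
    have sb := hstep b hb.2 y
    omega
  constructor
  · constructor
    · intro l h1 h2
      exact hpos (2 * l - 1) (by omega) (by omega)
    · intro l h1 h2
      have e : 2 * l - 1 = 2 * (l - 1) - 1 + 2 := by omega
      show c (2 * (l - 1) - 1) + t ≤ c (2 * l - 1)
      rw [e]
      exact key (2 * (l - 1) - 1) (by omega) (by omega)
  · constructor
    · intro l h1 h2
      exact hpos (2 * l) (by omega) (by omega)
    · intro l h1 h2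
      have e : 2 * l = 2 * (l - 1) + 2 := by omega
      show c (2 * (l - 1)) + t ≤ c (2 * l)
      rw [e]
      exact key (2 * (l - 1)) (by omega) (by omega)
end

section
/- Let t ≥ 1 and u = x_{i_1}···x_{i_d} a t-spread monomial with i_d = n. The set F_1 = [j_1, j_1+t-1] ∪ [j_2, j_2+t-1] ∪ ··· ∪ [j_{d-1}, j_{d-1}+t-1], where j_l ≤ i_l for 1 ≤ l ≤ d-1 and j_l - j_{l-1} ≥ t for 2 ≤ l ≤ d-1, is a face of the simplicial complex Δ with Stanley-Reisner ideal B_t(u); i.e., no minimal generator of B_t(u) has its support contained in F_1. -/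
theorem F1_is_face
    (t d n : ℕ) (ht : 1 ≤ t) (hd : 2 ≤ d)
    (i j : ℕ → ℕ) (hi : IsTSpread t d i) (hn : i d = n)
    (hj1 : ∀ r, 1 ≤ r → r ≤ d - 1 → 1 ≤ j r ∧ j r ≤ i r)
    (hj2 : ∀ r, 2 ≤ r → r ≤ d - 1 → j (r - 1) + t ≤ j r) :
    ¬ ∃ k, IsGen t d i k ∧
      ∀ l, 1 ≤ l → l ≤ d → ∃ r, 1 ≤ r ∧ r ≤ d - 1 ∧ j r ≤ k l ∧ k l < j r + t := by
  rintro ⟨k, ⟨⟨-, hk2⟩, -⟩, hF⟩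
  have jmono : ∀ a b : ℕ, 1 ≤ a → a ≤ b → b ≤ d - 1 → j a ≤ j b := by
    intro a b ha hab hb
    induction b with
    | zero => omega
    | succ b ih =>
      rcases Nat.eq_or_lt_of_le hab with h | h
      · exact h ▸ le_rfl
      · have h1 : j b + t ≤ j (b + 1) := by
          have := hj2 (b + 1) (by omega) hb
          simpa using this
        have h2 : j a ≤ j b := ih (by omega) (by omega)
        omega
  have main : ∀ l, 1 ≤ l → l ≤ d → ∃ rr, l ≤ rr ∧ rr ≤ d - 1 ∧ j rr ≤ k l := by
    intro l
    induction l with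
    | zero => omega
    | succ l ih =>
      intro _ hl
      rcases Nat.eq_zero_or_pos l with h0 | h0
      · subst h0
        obtain ⟨rr, h1, h2, h3, _⟩ := hF 1 le_rfl (by omega)
        exact ⟨rr, h1, h2, h3⟩
      · obtain ⟨rr, hle, hrd, hjk⟩ := ih (by omega) (by omega)
        obtain ⟨rr', h1', h2', h3', h4'⟩ := hF (l + 1) (by omega) hl
        have hgap : k l + t ≤ k (l + 1) := by
          have := hk2 (l + 1) (by omega) hl
          simpa using this
        have hlt : rr < rr' := by
          by_contra hcon
          have : j rr' ≤ j rr := jmono rr' rr h1' (by omega) hrd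
          omega
        exact ⟨rr', by omega, h2', h3'⟩
  obtain ⟨rr, h1, h2, _⟩ := main d (by omega) le_rfl
  omega
end

section
/- Let t ≥ 1 and u = x_{i_1}···x_{i_d} a t-spread monomial with i_d = n. The set F_2 = {i_1+1, i_1+2, ..., n} is a face of the simplicial complex Δ with Stanley-Reisner ideal B_t(u), and moreover (x_1,...,x_{i_1}) is a minimal prime of B_t(u). -/
theorem F2_is_face_and_minimal_prime
    (t d n : ℕ) (ht : 1 ≤ t) (hd : 1 ≤ d)
    (i : ℕ → ℕ) (hi : IsTSpread t d i) (hn : i d = n) :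
    (∀ k, IsGen t d i k → ∃ l, 1 ≤ l ∧ l ≤ d ∧ k l ≤ i 1) ∧
    (∀ p, 1 ≤ p → p ≤ i 1 → ∃ k, IsGen t d i k ∧
      (∃ l, 1 ≤ l ∧ l ≤ d ∧ k l = p) ∧
      ∀ l, 1 ≤ l → l ≤ d → k l ≤ i 1 → k l = p) := by
  have hmono : ∀ l, 2 ≤ l → l ≤ d → i 1 < i l := by
    intro l
    induction l with
    | zero => omega
    | succ m ih =>
      intro h2 hld
      rcases Nat.lt_or_ge m 2 with hm | hm
      · have hm1 : m = 1 := by omega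
        subst hm1
        have h2 : i 1 + t ≤ i 2 := hi.2 2 le_rfl (by omega)
        show i 1 < i 2
        omega
      · have h := hi.2 (m + 1) (by omega) hld
        simp only [Nat.add_sub_cancel] at h
        have := ih hm (by omega)
        omega
  constructor
  · intro k hk
    exact ⟨1, le_rfl, hd, hk.2 1 le_rfl hd⟩
  · intro p hp1 hpi
    refine ⟨fun l => if l = 1 then p else i l, ⟨⟨?_, ?_⟩, ?_⟩, ⟨1, le_rfl, hd, by simp⟩, ?_⟩
    · intro l hl1 hld
      by_cases h : l = 1 <;> simp [h]
      · omega
      · exact hi.1 l hl1 hld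
    · intro l hl2 hld
      have h := hi.2 l hl2 hld
      by_cases h1 : l - 1 = 1
      · have hl : l = 2 := by omega
        subst hl
        have h2 : i 1 + t ≤ i 2 := hi.2 2 le_rfl hld
        norm_num
        omega
      · simp only [if_neg h1, if_neg (by omega : l ≠ 1)]
        exact h
    · intro l hl1 hld
      by_cases h : l = 1 <;> simp [h]
      omega
    · intro l hl1 hld hle
      by_cases h : l = 1
      · simp [h]
      · exfalso
        have := hmono l (by omega) hld
        simp only [if_neg h] at hle
        omega
end

section
/- Let t ≥ 1 and u = x_{i_1}···x_{i_d} a t-spread monomial with i_d = n. For 2 ≤ s ≤ d-1 and j_1,...,j_{s-1} with j_l ≤ i_l and j_l - j_{l-1} ≥ t, the set F_3 = [j_1, j_1+t-1] ∪ ··· ∪ [j_{s-1}, j_{s-1}+t-1] ∪ [i_s+1, n] (assuming i_s + 1 - j_{s-1} ≥ t) is a face of the simplicial complex with Stanley-Reisner ideal B_t(u). -/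
lemma mono_step {t m : ℕ} (ht : 1 ≤ t) {f : ℕ → ℕ}
    (h : ∀ l, 2 ≤ l → l ≤ m → f (l - 1) + t ≤ f l) :
    ∀ a b, 1 ≤ a → a ≤ b → b ≤ m → f a ≤ f b := by
  intro a b ha
  induction b with
  | zero => intro hab _; omega
  | succ b ih =>
    intro hab hbm
    rcases Nat.eq_or_lt_of_le hab with heq | hlt
    · rw [heq]
    · have hab' : a ≤ b := Nat.lt_succ_iff.mp hlt
      have h1 := h (b + 1) (by omega) hbm
      simp only [Nat.add_sub_cancel] at h1
      have h2 : f a ≤ f b := ih hab' (by omega)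
      omega

theorem F3_is_face
    (t d n s : ℕ) (ht : 1 ≤ t) (hs1 : 2 ≤ s) (hs2 : s ≤ d - 1)
    (i j : ℕ → ℕ) (hi : IsTSpread t d i) (hn : i d = n)
    (hj1 : ∀ r, 1 ≤ r → r ≤ s - 1 → 1 ≤ j r ∧ j r ≤ i r)
    (hj2 : ∀ r, 2 ≤ r → r ≤ s - 1 → j (r - 1) + t ≤ j r)
    (hjs : j (s - 1) + t ≤ i s + 1) :
    ¬ ∃ k, IsGen t d i k ∧
      ∀ l, 1 ≤ l → l ≤ d →
        (∃ r, 1 ≤ r ∧ r ≤ s - 1 ∧ j r ≤ k l ∧ k l < j r + t) ∨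
        (i s + 1 ≤ k l ∧ k l ≤ n) := by
  rintro ⟨k, ⟨⟨⟨kpos, kspread⟩, kle⟩, hF⟩⟩
  have hd : s < d := by omega
  have jmono := mono_step ht hj2
  have imono := mono_step ht hi.2
  have claim : ∀ l, l ≤ s - 1 → 1 ≤ l → j l ≤ k l := by
    intro l
    induction l with
    | zero => intro _ h; omega
    | succ l ih =>
      intro hl _
      rcases hF (l + 1) (by omega) (by omega) with ⟨r, hr1, hr2, hr3, hr4⟩ | ⟨h1, _⟩
      · by_cases hrl : l + 1 ≤ r
        · exact le_trans (jmono (l + 1) r (by omega) hrl hr2) hr3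
        · have hl1 : 1 ≤ l := by omega
          have hjl : j l ≤ k l := ih (by omega) hl1
          have hstep := kspread (l + 1) (by omega) (by omega)
          simp only [Nat.add_sub_cancel] at hstep
          have hjr : j r ≤ j l := jmono r l hr1 (by omega) (by omega)
          omega
      · have hb : k (l + 1) ≤ i (l + 1) := kle (l + 1) (by omega) (by omega)
        have hc : i (l + 1) ≤ i s := imono (l + 1) s (by omega) (by omega) (by omega)
        omega
  have hks1 : j (s - 1) ≤ k (s - 1) := claim (s - 1) (le_refl _) (by omega)
  have hstep : k (s - 1) + t ≤ k s := kspread s hs1 (by omega)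
  have hks : k s ≤ i s := kle s (by omega) (by omega)
  rcases hF s (by omega) (by omega) with ⟨r, hr1, hr2, hr3, hr4⟩ | ⟨h1, _⟩
  · have : j r ≤ j (s - 1) := jmono r (s - 1) hr1 hr2 (le_refl _)
    omega
  · omega
end

section
/- Let t ≥ 1 and u = x_{i_1}···x_{i_d} a t-spread monomial with i_d = n. The face F_1 = [j_1, j_1+t-1] ∪ ··· ∪ [j_{d-1}, j_{d-1}+t-1] (with j_l ≤ i_l and j_l - j_{l-1} ≥ t) is a facet of the simplicial complex Δ with Stanley-Reisner ideal B_t(u): for every j ∈ [n] \ F_1, the set F_1 ∪ {j} contains the support of some minimal generator of B_t(u). -/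
theorem F1_is_facet
    (t d n : ℕ) (ht : 1 ≤ t) (hd : 2 ≤ d)
    (i j : ℕ → ℕ) (hi : IsTSpread t d i) (hn : i d = n)
    (hj1 : ∀ r, 1 ≤ r → r ≤ d - 1 → 1 ≤ j r ∧ j r ≤ i r)
    (hj2 : ∀ r, 2 ≤ r → r ≤ d - 1 → j (r - 1) + t ≤ j r)
    (x : ℕ) (hx1 : 1 ≤ x) (hx2 : x ≤ n)
    (hxF : ∀ r, 1 ≤ r → r ≤ d - 1 → ¬ (j r ≤ x ∧ x < j r + t)) :
    ∃ k, IsGen t d i k ∧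
      ∀ l, 1 ≤ l → l ≤ d →
        k l = x ∨ ∃ r, 1 ≤ r ∧ r ≤ d - 1 ∧ j r ≤ k l ∧ k l < j r + t := by
  classical
  set P : ℕ → Prop := fun r => 1 ≤ r ∧ j r + t ≤ x with hP
  set r₀ := Nat.findGreatest P (d - 1) with hr₀
  have hr₀le : r₀ ≤ d - 1 := Nat.findGreatest_le _
  have hspec : 1 ≤ r₀ → j r₀ + t ≤ x := by
    intro h
    exact (Nat.findGreatest_of_ne_zero hr₀.symm (by omega)).2
  have hgt : ∀ r, r₀ < r → r ≤ d - 1 → x < j r := by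
    intro r hr hrd
    have h1 : 1 ≤ r := by omega
    have hnP : ¬ P r := Nat.findGreatest_is_greatest hr hrd
    have := hxF r h1 hrd
    simp only [hP, not_and, not_lt] at hnP ⊢
    omega
  refine ⟨fun l => if l ≤ r₀ then j l else if l = r₀ + 1 then x else j (l - 1) + (t - 1),
    ⟨⟨?_, ?_⟩, ?_⟩, ?_⟩
  · intro l h1 h2
    by_cases hc : l ≤ r₀
    · simp only [if_pos hc]
      exact (hj1 l h1 (by omega)).1
    · by_cases hc2 : l = r₀ + 1
      · simp [hc, hc2, hx1]
      · simp only [if_neg hc, if_neg hc2]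
        have := (hj1 (l - 1) (by omega) (by omega)).1
        omega
  · intro l h2 hld
    by_cases hc : l ≤ r₀
    · have hc1 : l - 1 ≤ r₀ := by omega
      simp only [if_pos hc, if_pos hc1]
      exact hj2 l h2 (by omega)
    · by_cases hc2 : l = r₀ + 1
      · have hc1 : l - 1 ≤ r₀ := by omega
        simp only [if_neg hc, if_pos hc1, if_pos hc2]
        have : l - 1 = r₀ := by omega
        rw [this]
        exact hspec (by omega)
      · simp only [if_neg hc, if_neg hc2]
        by_cases hc3 : l = r₀ + 2
        · have h1 : l - 1 = r₀ + 1 := by omega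
          rw [h1, if_neg (show ¬ r₀ + 1 ≤ r₀ by omega), if_pos rfl]
          have := hgt (r₀ + 1) (by omega) (by omega)
          omega
        · have h2' : ¬ (l - 1 ≤ r₀) := by omega
          have h3' : ¬ (l - 1 = r₀ + 1) := by omega
          simp only [if_neg h2', if_neg h3']
          have := hj2 (l - 1) (by omega) (by omega)
          have : j (l - 1 - 1) + t ≤ j (l - 1) := by
            have h11 : l - 1 - 1 = l - 2 := by omega
            have := hj2 (l - 1) (by omega) (by omega)
            omega
          omega
  · intro l h1 hld
    by_cases hc : l ≤ r₀
    · simp only [if_pos hc]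
      exact (hj1 l h1 (by omega)).2
    · by_cases hc2 : l = r₀ + 1
      · simp only [if_neg hc, if_pos hc2]
        by_cases hc3 : l ≤ d - 1
        · have := hgt l (by omega) hc3
          have := (hj1 l h1 hc3).2
          omega
        · have : l = d := by omega
          rw [this]
          omega
      · simp only [if_neg hc, if_neg hc2]
        have h1' := (hj1 (l - 1) (by omega) (by omega)).2
        have h2' := hi.2 l (by omega) hld
        omega
  · intro l h1 hld
    by_cases hc : l ≤ r₀
    · simp only [if_pos hc]
      exact Or.inr ⟨l, h1, by omega, le_refl _, by omega⟩
    · by_cases hc2 : l = r₀ + 1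
      · simp [hc, hc2]
      · simp only [if_neg hc, if_neg hc2]
        exact Or.inr ⟨l - 1, by omega, by omega, by omega, by omega⟩
end

section
/- Let t ≥ 1 and u = x_{i_1}···x_{i_d} a t-spread monomial with i_d = n and such that every index in [n] appears in some minimal generator of B_t(u). Then every face of the simplicial complex Δ with Stanley-Reisner ideal B_t(u) is contained in a set of one of the forms: (i) a union of d-1 intervals [j_r, j_r+t-1] with j_r ≤ i_r and j_r - j_{r-1} ≥ t; (ii) {i_1+1, ..., n}; (iii) a union of s-1 intervals [j_r, j_r+t-1] (j_r ≤ i_r, j_r - j_{r-1} ≥ t) together with [i_s+1, n] for some 2 ≤ s ≤ d-1. -/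
/-- The nested sets of the greedy construction: `gset 0 = G`,
`gset (m+1) = {x ∈ G : sInf (gset m) + t ≤ x}`. -/
def gset (t : ℕ) (G : ℕ → Prop) : ℕ → Set ℕ
  | 0 => {x | G x}
  | (m+1) => {x | G x ∧ sInf (gset t G m) + t ≤ x}

lemma mem_gset_zero (t : ℕ) (G : ℕ → Prop) (x : ℕ) : x ∈ gset t G 0 ↔ G x := Iff.rfl

lemma mem_gset_succ (t : ℕ) (G : ℕ → Prop) (m x : ℕ) :
    x ∈ gset t G (m+1) ↔ G x ∧ sInf (gset t G m) + t ≤ x := Iff.rfl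

lemma gset_subG (t : ℕ) (G : ℕ → Prop) : ∀ m x, x ∈ gset t G m → G x
  | 0, _, h => h
  | (_+1), _, h => h.1

lemma gset_cover (t : ℕ) (G : ℕ → Prop) :
    ∀ m x, G x → x < sInf (gset t G m) + t →
      ∃ r, r ≤ m ∧ sInf (gset t G r) ≤ x ∧ x < sInf (gset t G r) + t := by
  intro m
  induction m with
  | zero =>
    intro x hx h
    exact ⟨0, le_refl _, Nat.sInf_le ((mem_gset_zero t G x).2 hx), h⟩
  | succ m ih =>
    intro x hx h
    by_cases hc : x < sInf (gset t G m) + t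
    · obtain ⟨r, hr, h1, h2⟩ := ih x hx hc
      exact ⟨r, Nat.le_succ_of_le hr, h1, h2⟩
    · exact ⟨m+1, le_refl _,
        Nat.sInf_le ((mem_gset_succ t G m x).2 ⟨hx, Nat.le_of_not_lt hc⟩), h⟩

theorem faces_contained_in_three_types
    (t d n : ℕ) (ht : 1 ≤ t) (hd : 2 ≤ d)
    (i : ℕ → ℕ) (hi : IsTSpread t d i) (hn : i d = n)
    (hfull : ∀ m, 1 ≤ m → m ≤ n → ∃ k l, IsGen t d i k ∧ 1 ≤ l ∧ l ≤ d ∧ k l = m)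
    (G : ℕ → Prop) (hG : ∀ x, G x → 1 ≤ x ∧ x ≤ n)
    (hface : ¬ ∃ k, IsGen t d i k ∧ ∀ l, 1 ≤ l → l ≤ d → G (k l)) :
    -- (i) a union of `d-1` intervals `[j_r, j_r + t - 1]`
    (∃ j : ℕ → ℕ,
      (∀ r, 1 ≤ r → r ≤ d - 1 → 1 ≤ j r ∧ j r ≤ i r) ∧
      (∀ r, 2 ≤ r → r ≤ d - 1 → j (r - 1) + t ≤ j r) ∧
      ∀ x, G x → ∃ r, 1 ≤ r ∧ r ≤ d - 1 ∧ j r ≤ x ∧ x < j r + t) ∨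
    -- (ii) the interval `{i_1 + 1, …, n}`
    (∀ x, G x → i 1 + 1 ≤ x) ∨
    -- (iii) `s-1` intervals together with `[i_s + 1, n]`
    (∃ s, 2 ≤ s ∧ s ≤ d - 1 ∧ ∃ j : ℕ → ℕ,
      (∀ r, 1 ≤ r → r ≤ s - 1 → 1 ≤ j r ∧ j r ≤ i r) ∧
      (∀ r, 2 ≤ r → r ≤ s - 1 → j (r - 1) + t ≤ j r) ∧
      j (s - 1) + t ≤ i s + 1 ∧
      ∀ x, G x → (∃ r, 1 ≤ r ∧ r ≤ s - 1 ∧ j r ≤ x ∧ x < j r + t) ∨ i s + 1 ≤ x) := by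
  classical
  set f : ℕ → ℕ := fun m => sInf (gset t G m) with hfdef
  by_cases H : ∀ l, l < d → (gset t G l).Nonempty ∧ f l ≤ i (l+1)
  · -- the greedy sequence gives a generator inside G: contradiction
    exfalso
    apply hface
    have hmem : ∀ l, l < d → f l ∈ gset t G l := fun l hl => Nat.sInf_mem (H l hl).1
    refine ⟨fun l => f (l-1), ⟨⟨?_, ?_⟩, ?_⟩, ?_⟩
    · intro l h1 hl
      have hGf : G (f (l-1)) := gset_subG t G _ _ (hmem (l-1) (by omega))
      exact (hG _ hGf).1
    · intro l h2 hl
      have e : l - 1 = (l-2) + 1 := by omega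
      have hm : f (l-1) ∈ gset t G ((l-2)+1) := by rw [← e]; exact hmem (l-1) (by omega)
      have h2' : sInf (gset t G (l-2)) + t ≤ f (l-1) := hm.2
      show f (l - 1 - 1) + t ≤ f (l - 1)
      have e2 : l - 1 - 1 = l - 2 := by omega
      rw [e2]
      exact h2'
    · intro l h1 hl
      have := (H (l-1) (by omega)).2
      have e : l - 1 + 1 = l := by omega
      rwa [e] at this
    · intro l h1 hl
      exact gset_subG t G _ _ (hmem (l-1) (by omega))
  · -- there is a minimal failure index l₀
    push_neg at H
    obtain ⟨l, hld, hQl⟩ := H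
    have hex : ∃ l, l < d ∧ ¬((gset t G l).Nonempty ∧ f l ≤ i (l+1)) :=
      ⟨l, hld, by intro hh; have := hQl hh.1; omega⟩
    have hkey : ∃ l₀, (l₀ < d ∧ ¬((gset t G l₀).Nonempty ∧ f l₀ ≤ i (l₀+1))) ∧
        ∀ m, m < l₀ → (gset t G m).Nonempty ∧ f m ≤ i (m+1) := by
      refine ⟨Nat.find hex, Nat.find_spec hex, ?_⟩
      intro m hm
      by_contra h
      have hdlt := (Nat.find_spec hex).1
      exact Nat.find_min hex hm ⟨by omega, h⟩
    obtain ⟨l₀, ⟨hl₀d, hQ⟩, hmin⟩ := hkey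
    obtain _ | m := l₀
    · -- l₀ = 0
      simp only [Nat.zero_add] at hQ
      by_cases hne : (gset t G 0).Nonempty
      · have hgt : i 1 < f 0 := by
          by_contra h
          exact hQ ⟨hne, by omega⟩
        right; left
        intro x hx
        have : f 0 ≤ x := Nat.sInf_le ((mem_gset_zero t G x).2 hx)
        omega
      · -- G is empty
        left
        refine ⟨i, ?_, ?_, ?_⟩
        · intro r h1 hr; exact ⟨hi.1 r h1 (by omega), le_refl _⟩
        · intro r h2 hr; exact hi.2 r h2 (by omega)
        · intro x hx; exact absurd ⟨x, (mem_gset_zero t G x).2 hx⟩ hne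
    · -- l₀ = m+1, so the greedy sequence works up to index m
      have e12 : m + 1 + 1 = m + 2 := by omega
      rw [e12] at hQ
      have hmemf : ∀ l, l ≤ m → f l ∈ gset t G l := fun l hl => Nat.sInf_mem (hmin l (by omega)).1
      have hGf : ∀ l, l ≤ m → G (f l) := fun l hl => gset_subG t G _ _ (hmemf l hl)
      have hle : ∀ l, l ≤ m → f l ≤ i (l+1) := fun l hl => (hmin l (by omega)).2
      have hspread : ∀ l, l ≤ m → 1 ≤ l → f (l-1) + t ≤ f l := by
        intro l hl h1
        have e : l = (l-1) + 1 := by omega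
        have hm2 : f l ∈ gset t G ((l-1)+1) := by rw [← e]; exact hmemf l hl
        exact hm2.2
      by_cases hne : (gset t G (m+1)).Nonempty
      · -- greedy defined at m+1 but f (m+1) > i (m+2)
        have hgt : i (m+2) < f (m+1) := by
          by_contra h
          exact hQ ⟨hne, by omega⟩
        have hGf1 : G (f (m+1)) := gset_subG t G _ _ (Nat.sInf_mem hne)
        rcases Nat.lt_or_ge (m+2) d with hlt | hge
        · -- case (iii) with s = m+2
          right; right
          refine ⟨m+2, by omega, by omega, fun r => f (r-1), ?_, ?_, ?_, ?_⟩
          · intro r h1 hr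
            have hr' : r - 1 ≤ m := by omega
            refine ⟨(hG _ (hGf _ hr')).1, ?_⟩
            have := hle (r-1) hr'
            have e : r - 1 + 1 = r := by omega
            rwa [e] at this
          · intro r h2 hr
            show f (r - 1 - 1) + t ≤ f (r - 1)
            exact hspread (r-1) (by omega) (by omega)
          · -- j (s-1) + t ≤ i s + 1
            show f m + t ≤ i (m+2) + 1
            have h1 : f m ≤ i (m+1) := hle m (le_refl _)
            have h2 : i (m+2-1) + t ≤ i (m+2) := hi.2 (m+2) (by omega) (by omega)
            have e3 : m + 2 - 1 = m + 1 := by omega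
            rw [e3] at h2
            omega
          · intro x hx
            by_cases hc : x < f m + t
            · obtain ⟨r, hr, h1, h2⟩ := gset_cover t G m x hx hc
              left
              refine ⟨r+1, by omega, by omega, ?_, ?_⟩
              · simpa using h1
              · simpa using h2
            · right
              have hx1 : x ∈ gset t G (m+1) :=
                (mem_gset_succ t G m x).2 ⟨hx, Nat.le_of_not_lt hc⟩
              have h2 : f (m+1) ≤ x := Nat.sInf_le hx1
              omega
        · -- m+2 = d : contradiction since f (m+1) ≤ n = i d
          exfalso
          have hxd : m + 2 = d := by omega
          have : f (m+1) ≤ n := (hG _ hGf1).2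
          rw [← hn, ← hxd] at this
          omega
      · -- gset (m+1) empty: case (i)
        left
        refine ⟨fun r => if r ≤ m+1 then f (r-1) else i r, ?_, ?_, ?_⟩
        · intro r h1 hr
          by_cases hc : r ≤ m+1
          · simp only [if_pos hc]
            have hr' : r - 1 ≤ m := by omega
            refine ⟨(hG _ (hGf _ hr')).1, ?_⟩
            have := hle (r-1) hr'
            have e : r - 1 + 1 = r := by omega
            rwa [e] at this
          · simp only [if_neg hc]
            exact ⟨hi.1 r h1 (by omega), le_refl _⟩
        · intro r h2 hr
          by_cases hc : r ≤ m+1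
          · have hc' : r - 1 ≤ m+1 := by omega
            simp only [if_pos hc, if_pos hc']
            exact hspread (r-1) (by omega) (by omega)
          · by_cases hc2 : r - 1 ≤ m + 1
            · -- boundary: r = m+2
              have hr2 : r = m + 2 := by omega
              simp only [if_neg hc, if_pos hc2]
              have e : r - 1 = m + 1 := by omega
              rw [e]
              have e2 : m + 1 - 1 = m := by omega
              rw [e2]
              have h1 : f m ≤ i (m+1) := hle m (le_refl _)
              have h2 : i (r-1) + t ≤ i r := hi.2 r h2 (by omega)
              rw [e] at h2
              omega
            · simp only [if_neg hc, if_neg hc2]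
              exact hi.2 r h2 (by omega)
        · intro x hx
          have hc : x < f m + t := by
            by_contra h
            exact hne ⟨x, (mem_gset_succ t G m x).2 ⟨hx, Nat.le_of_not_lt h⟩⟩
          obtain ⟨r, hr, h1, h2⟩ := gset_cover t G m x hx hc
          refine ⟨r+1, by omega, by omega, ?_, ?_⟩
          · simp only [if_pos (by omega : r+1 ≤ m+1)]
            simpa using h1
          · simp only [if_pos (by omega : r+1 ≤ m+1)]
            simpa using h2
end

section
/- Let t ≥ 1 and u = x_{i_1}···x_{i_d} a t-spread monomial. The Alexander dual generators of B_t(u) of type (3) have linear quotients: ordering w_1 = x_1···x_{i_1} first, then the monomials w = (x_1···x_{i_s}) / (v_{j_1}···v_{j_{s-1}}) (where v_j = x_j x_{j+1}···x_{j+t-1}, 2 ≤ s ≤ d-1, j_l ≤ i_l, j_l - j_{l-1} ≥ t) decreasingly in the pure lexicographic order, then the monomials (x_1···x_n)/(v_{j_1}···v_{j_{d-1}}) decreasingly in pure lex, for every j > 1 and g < j there exists an earlier generator w in the list and a variable x_l with x_l = w / gcd(w, w_j) and x_l dividing w_g / gcd(w_g, w_j). -/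
/-- `A >_lex B` for squarefree monomials (pure lexicographic order with
`x_1 > x_2 > ⋯`). -/
def LexGT (A B : Finset ℕ) : Prop :=
  ∃ m, m ∈ A ∧ m ∉ B ∧ ∀ p, p < m → (p ∈ A ↔ p ∈ B)

/-- Type (2): the generator `x_1 ⋯ x_{i_1}`. -/
def TypeA (i1 : ℕ) (W : Finset ℕ) : Prop :=
  W = Finset.Icc 1 i1

/-- Type (3): `(x_1 ⋯ x_{i_s}) / (v_{j_1} ⋯ v_{j_{s-1}})` with `2 ≤ s ≤ d-1`,
`j_l ≤ i_l`, `j_l - j_{l-1} ≥ t`. -/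
def TypeMid (t d : ℕ) (i : ℕ → ℕ) (W : Finset ℕ) : Prop :=
  ∃ s, 2 ≤ s ∧ s ≤ d - 1 ∧ ∃ j : ℕ → ℕ,
    (∀ r, 1 ≤ r → r ≤ s - 1 → 1 ≤ j r ∧ j r ≤ i r) ∧
    (∀ r, 2 ≤ r → r ≤ s - 1 → j (r - 1) + t ≤ j r) ∧
    W = Finset.Icc 1 (i s) \
      (Finset.Icc 1 (s - 1)).biUnion (fun r => Finset.Icc (j r) (j r + t - 1))

/-- Type (1): `(x_1 ⋯ x_n) / (v_{j_1} ⋯ v_{j_{d-1}})`. -/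
def TypeTop (t d n : ℕ) (i : ℕ → ℕ) (W : Finset ℕ) : Prop :=
  ∃ j : ℕ → ℕ,
    (∀ r, 1 ≤ r → r ≤ d - 1 → 1 ≤ j r ∧ j r ≤ i r) ∧
    (∀ r, 2 ≤ r → r ≤ d - 1 → j (r - 1) + t ≤ j r) ∧
    W = Finset.Icc 1 n \
      (Finset.Icc 1 (d - 1)).biUnion (fun r => Finset.Icc (j r) (j r + t - 1))

/-- Minimal generators of the Alexander dual ideal `B_t(u)^∨`. -/
def DualGen (t d n : ℕ) (i : ℕ → ℕ) (W : Finset ℕ) : Prop :=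
  TypeA (i 1) W ∨ TypeMid t d i W ∨ TypeTop t d n i W

/-- `W` comes strictly before `W'` in the linear-quotients order: `w₁` first,
then type (3) in decreasing pure lex, then type (1) in decreasing pure lex. -/
def Earlier (t d n : ℕ) (i : ℕ → ℕ) (W W' : Finset ℕ) : Prop :=
  (TypeA (i 1) W ∧ ¬ TypeA (i 1) W') ∨
  (TypeMid t d i W ∧ TypeMid t d i W' ∧ LexGT W W') ∨
  (TypeMid t d i W ∧ TypeTop t d n i W') ∨
  (TypeTop t d n i W ∧ TypeTop t d n i W' ∧ LexGT W W')

namespace LinQuotAux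


def Rem (t : ℕ) (j : ℕ → ℕ) (k : ℕ) : Finset ℕ :=
  (Finset.Icc 1 k).biUnion fun r => Finset.Icc (j r) (j r + t - 1)

lemma mem_Rem {t k x : ℕ} {j : ℕ → ℕ} :
    x ∈ Rem t j k ↔ ∃ r, 1 ≤ r ∧ r ≤ k ∧ j r ≤ x ∧ x ≤ j r + t - 1 := by
  simp only [Rem, Finset.mem_biUnion, Finset.mem_Icc]
  constructor
  · rintro ⟨r, ⟨h1, h2⟩, h3, h4⟩; exact ⟨r, h1, h2, h3, h4⟩
  · rintro ⟨r, h1, h2, h3, h4⟩; exact ⟨r, ⟨h1, h2⟩, h3, h4⟩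

lemma Rem_zero {t : ℕ} {j : ℕ → ℕ} : Rem t j 0 = ∅ := by
  simp [Rem]

lemma spread_mono {t k : ℕ} {j : ℕ → ℕ}
    (hjs : ∀ r, 2 ≤ r → r ≤ k → j (r - 1) + t ≤ j r)
    {a b : ℕ} (ha : 1 ≤ a) (hab : a ≤ b) (hb : b ≤ k) :
    j a + (b - a) * t ≤ j b := by
  induction b, hab using Nat.le_induction with
  | base => simp
  | succ b hab ih =>
    have h1 := ih (by omega)
    have h2 := hjs (b + 1) (by omega) hb
    simp only [Nat.add_sub_cancel] at h2
    have h3 : (b + 1 - a) * t = (b - a) * t + t := by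
      rw [show b + 1 - a = (b - a) + 1 by omega, Nat.add_mul, one_mul]
    rw [h3, ← Nat.add_assoc]
    exact le_trans (Nat.add_le_add_right h1 t) h2

lemma spread_le {t k : ℕ} {j : ℕ → ℕ}
    (hjs : ∀ r, 2 ≤ r → r ≤ k → j (r - 1) + t ≤ j r)
    {a b : ℕ} (ha : 1 ≤ a) (hab : a ≤ b) (hb : b ≤ k) : j a ≤ j b :=
  le_trans (Nat.le_add_right _ _) (spread_mono hjs ha hab hb)

lemma spread_lt {t k : ℕ} {j : ℕ → ℕ}
    (hjs : ∀ r, 2 ≤ r → r ≤ k → j (r - 1) + t ≤ j r)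
    {a b : ℕ} (ha : 1 ≤ a) (hab : a < b) (hb : b ≤ k) : j a + t ≤ j b := by
  have h1 := spread_mono hjs ha (le_of_lt hab) hb
  have h2 : t ≤ (b - a) * t := by
    calc t = 1 * t := (one_mul t).symm
    _ ≤ (b - a) * t := mul_le_mul_left (by omega) t
  exact le_trans (Nat.add_le_add_left h2 _) h1

lemma Rem_bound {t d : ℕ} {i j : ℕ → ℕ} (ht : 1 ≤ t)
    (his : ∀ l, 2 ≤ l → l ≤ d → i (l - 1) + t ≤ i l)
    {s : ℕ} (hs2 : 2 ≤ s) (hsd : s ≤ d)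
    (hjb : ∀ r, 1 ≤ r → r ≤ s - 1 → 1 ≤ j r ∧ j r ≤ i r)
    {x : ℕ} (hx : x ∈ Rem t j (s - 1)) : 1 ≤ x ∧ x < i s := by
  rw [mem_Rem] at hx
  obtain ⟨r, h1, h2, h3, h4⟩ := hx
  have hb := hjb r h1 h2
  have h5 : i r ≤ i (s - 1) := spread_le his h1 h2 (by omega)
  have h6 : i (s - 1) + t ≤ i s := his s hs2 hsd
  exact ⟨by omega, by omega⟩

lemma top_mem {t d : ℕ} {i j : ℕ → ℕ} (ht : 1 ≤ t)
    (hi1 : ∀ l, 1 ≤ l → l ≤ d → 1 ≤ i l)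
    (his : ∀ l, 2 ≤ l → l ≤ d → i (l - 1) + t ≤ i l)
    {s : ℕ} (hs2 : 2 ≤ s) (hsd : s ≤ d)
    (hjb : ∀ r, 1 ≤ r → r ≤ s - 1 → 1 ≤ j r ∧ j r ≤ i r) :
    i s ∈ Finset.Icc 1 (i s) \ Rem t j (s - 1) := by
  rw [Finset.mem_sdiff, Finset.mem_Icc]
  refine ⟨⟨hi1 s (by omega) hsd, le_rfl⟩, fun h => ?_⟩
  exact absurd (Rem_bound ht his hs2 hsd hjb h).2 (lt_irrefl _)

lemma pig {t : ℕ} (ht : 1 ≤ t) :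
    ∀ (k : ℕ) (j : ℕ → ℕ), (∀ r, 2 ≤ r → r ≤ k → j (r - 1) + t ≤ j r) →
    ∀ (h : ℕ → ℕ) (c : ℕ), (∀ r, 2 ≤ r → r ≤ c → h (r - 1) + t ≤ h r) →
    (∀ r, 1 ≤ r → r ≤ c → h r ∈ Rem t j k) → c ≤ k := by
  intro k
  induction k with
  | zero =>
    intro j _ h c _ hmem
    by_contra hc
    have h1 := hmem c (by omega) le_rfl
    rw [mem_Rem] at h1
    obtain ⟨r, h1, h2, _⟩ := h1
    omega
  | succ k ih =>
    intro j hjs h c hhs hmem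
    rcases Nat.eq_zero_or_pos c with rfl | hc
    · omega
    have hmem' : ∀ r, 1 ≤ r → r ≤ c - 1 → h r ∈ Rem t j k := by
      intro r h1 h2
      have hr := hmem r h1 (by omega)
      rw [mem_Rem] at hr ⊢
      obtain ⟨r', hr1, hr2, hr3, hr4⟩ := hr
      refine ⟨r', hr1, ?_, hr3, hr4⟩
      by_contra hgt
      have hr'k : r' = k + 1 := by omega
      have hcmem := hmem c (by omega) le_rfl
      rw [mem_Rem] at hcmem
      obtain ⟨r'', h1'', h2'', h3'', h4''⟩ := hcmem
      have hm1 : j r'' ≤ j (k + 1) := spread_le hjs h1'' h2'' le_rfl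
      have hm2 : h r + t ≤ h c := spread_lt hhs h1 (by omega) le_rfl
      subst hr'k
      omega
    have := ih j (fun r a b => hjs r a (by omega)) h (c - 1)
      (fun r a b => hhs r a (by omega)) hmem'
    omega

lemma tile {t : ℕ} (ht : 1 ≤ t) {k : ℕ} {j : ℕ → ℕ}
    (hj1 : ∀ r, 1 ≤ r → r ≤ k → 1 ≤ j r)
    (hjs : ∀ r, 2 ≤ r → r ≤ k → j (r - 1) + t ≤ j r)
    {a : ℕ} (ha1 : 1 ≤ a) (hamem : a - 1 ∉ Rem t j k) :
    ∀ r, 1 ≤ r → r ≤ k → ∀ x, j r ≤ x → x ≤ j r + t - 1 → a ≤ x →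
      (∀ y, a ≤ y → y < x → y ∈ Rem t j k) → ∃ c, j r = a + c * t := by
  intro r
  induction r using Nat.strong_induction_on with
  | _ r IH =>
    intro hr1 hrk x hx1 hx2 hax hrun
    have hja : a ≤ j r := by
      by_contra hltc
      push_neg at hltc
      exact hamem (mem_Rem.mpr ⟨r, hr1, hrk, by omega, by omega⟩)
    rcases Nat.eq_or_lt_of_le hja with heq | hlt
    · exact ⟨0, by omega⟩
    · have hy : j r - 1 ∈ Rem t j k := hrun (j r - 1) (by omega) (by omega)
      rw [mem_Rem] at hy
      obtain ⟨r', h1', h2', h3', h4'⟩ := hy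
      have hr'r : r' < r := by
        by_contra hge
        push_neg at hge
        have := spread_le hjs hr1 hge h2'
        omega
      have hjr' : j r' + t ≤ j r := spread_lt hjs h1' hr'r hrk
      have hjr'eq : j r' = j r - t := by omega
      have hres := IH r' hr'r h1' (by omega) (j r - 1) (by omega) (by omega) (by omega)
        (fun y hy1 hy2 => hrun y hy1 (by omega))
      obtain ⟨c, hc⟩ := hres
      refine ⟨c + 1, ?_⟩
      have h5 : j r = j r' + t := by omega
      rw [h5, hc, Nat.add_mul, one_mul]
      ring

lemma transfer {t kR kH MR MH m : ℕ} {jR jH : ℕ → ℕ}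
    (hjR1 : ∀ r, 1 ≤ r → r ≤ kR → 1 ≤ jR r)
    (hjH1 : ∀ r, 1 ≤ r → r ≤ kH → 1 ≤ jH r)
    (hagree : ∀ p, p < m →
      (p ∈ Finset.Icc 1 MH \ Rem t jH kH ↔ p ∈ Finset.Icc 1 MR \ Rem t jR kR))
    (y : ℕ) (hy : y < m) (hyR : y ≤ MR) (hyH : y ≤ MH) :
    (y ∈ Rem t jR kR ↔ y ∈ Rem t jH kH) := by
  rcases Nat.eq_zero_or_pos y with rfl | hy1
  · have hR0 : (0 : ℕ) ∉ Rem t jR kR := by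
      rw [mem_Rem]; rintro ⟨r, h1, h2, h3, _⟩; have := hjR1 r h1 h2; omega
    have hH0 : (0 : ℕ) ∉ Rem t jH kH := by
      rw [mem_Rem]; rintro ⟨r, h1, h2, h3, _⟩; have := hjH1 r h1 h2; omega
    simp [hR0, hH0]
  · have h := hagree y hy
    simp only [Finset.mem_sdiff, Finset.mem_Icc] at h
    constructor
    · intro hR
      by_contra hH
      exact (h.mp ⟨⟨hy1, hyH⟩, hH⟩).2 hR
    · intro hH
      by_contra hR
      exact (h.mpr ⟨⟨hy1, hyR⟩, hR⟩).2 hH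


-- SHIFT construction
lemma shift {t d : ℕ} (ht : 1 ≤ t) {i : ℕ → ℕ}
    (his : ∀ l, 2 ≤ l → l ≤ d → i (l - 1) + t ≤ i l)
    {s : ℕ} {j : ℕ → ℕ} (hs2 : 2 ≤ s) (hsd : s ≤ d)
    (hjb : ∀ r, 1 ≤ r → r ≤ s - 1 → 1 ≤ j r ∧ j r ≤ i r)
    (hjs : ∀ r, 2 ≤ r → r ≤ s - 1 → j (r - 1) + t ≤ j r)
    {q : ℕ} (hq1 : 1 ≤ q) (hqs : q ≤ s - 1) (hlt : j q < i q) :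
    ∃ j' : ℕ → ℕ,
      (∀ r, 1 ≤ r → r ≤ s - 1 → 1 ≤ j' r ∧ j' r ≤ i r) ∧
      (∀ r, 2 ≤ r → r ≤ s - 1 → j' (r - 1) + t ≤ j' r) ∧
      (Finset.Icc 1 (i s) \ Rem t j' (s - 1)) \ (Finset.Icc 1 (i s) \ Rem t j (s - 1)) = {j q} ∧
      LexGT (Finset.Icc 1 (i s) \ Rem t j' (s - 1)) (Finset.Icc 1 (i s) \ Rem t j (s - 1)) := by
  classical
  set j' : ℕ → ℕ := fun r => if r < q then j r else max (j r) (j q + 1 + (r - q) * t) with hj'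
  have hj'lt : ∀ r, r < q → j' r = j r := fun r hr => by simp [hj', hr]
  have hj'ge : ∀ r, q ≤ r → j' r = max (j r) (j q + 1 + (r - q) * t) := fun r hr => by
    simp [hj', Nat.not_lt.mpr hr]
  have hj'q : j' q = j q + 1 := by
    rw [hj'ge q le_rfl, Nat.sub_self, Nat.zero_mul, Nat.add_zero]
    exact max_eq_right (by omega)
  have hjq1 : 1 ≤ j q := (hjb q hq1 hqs).1
  have hjqle : j q ≤ i s := by
    have h1 := (hjb q hq1 hqs).2
    have h2 : i q ≤ i s := spread_le his hq1 (by omega) hsd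
    omega
  -- bounds
  have hbound : ∀ r, 1 ≤ r → r ≤ s - 1 → 1 ≤ j' r ∧ j' r ≤ i r := by
    intro r h1 h2
    by_cases hr : r < q
    · rw [hj'lt r hr]; exact hjb r h1 h2
    · push_neg at hr
      rw [hj'ge r hr]
      refine ⟨le_trans (hjb r h1 h2).1 (le_max_left _ _), max_le (hjb r h1 h2).2 ?_⟩
      have h3 := spread_mono his hq1 hr (show r ≤ d by omega)
      calc j q + 1 + (r - q) * t ≤ i q + (r - q) * t :=
            Nat.add_le_add_right (show j q + 1 ≤ i q from hlt) _
      _ ≤ i r := h3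
  -- spread
  have hspread : ∀ r, 2 ≤ r → r ≤ s - 1 → j' (r - 1) + t ≤ j' r := by
    intro r h2 hk
    rcases Nat.lt_trichotomy r q with h | h | h
    · rw [hj'lt r h, hj'lt (r - 1) (by omega)]; exact hjs r h2 hk
    · subst h
      rw [hj'lt (r - 1) (by omega), hj'q]
      have := hjs r h2 hk
      omega
    · rw [hj'ge r (by omega), hj'ge (r - 1) (by omega)]
      have e : j q + 1 + (r - 1 - q) * t + t = j q + 1 + (r - q) * t := by
        rw [show r - q = (r - 1 - q) + 1 by omega, Nat.add_mul, one_mul]; ring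
      rw [← max_add_add_right]
      apply max_le
      · exact le_trans (hjs r (by omega) hk) (le_max_left _ _)
      · rw [e]; exact le_max_right _ _
  have hjq_inR : j q ∈ Rem t j (s - 1) := mem_Rem.mpr ⟨q, hq1, hqs, le_rfl, by omega⟩
  have hjq_notR' : j q ∉ Rem t j' (s - 1) := by
    rw [mem_Rem]; rintro ⟨r, h1, h2, h3, h4⟩
    by_cases hr : r < q
    · rw [hj'lt r hr] at h3 h4
      have := spread_lt hjs h1 hr hqs
      omega
    · push_neg at hr
      rw [hj'ge r hr] at h3
      have h5 : j q + 1 ≤ j' r := by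
        rw [hj'ge r hr]
        exact le_trans (Nat.le_add_right _ _) (le_max_right _ _)
      rw [hj'ge r hr] at h5
      omega
  have hmain : ∀ x, x ∈ Rem t j (s - 1) → x ∉ Rem t j' (s - 1) → x = j q := by
    intro x hxR hxR'
    rw [mem_Rem] at hxR
    obtain ⟨r, h1, h2, h3, h4⟩ := hxR
    by_cases hr : r < q
    · exact absurd (mem_Rem.mpr ⟨r, h1, h2, by rw [hj'lt r hr]; exact h3,
        by rw [hj'lt r hr]; exact h4⟩) hxR'
    push_neg at hr
    by_cases hx : j' r ≤ x
    · have hle : j r ≤ j' r := by rw [hj'ge r hr]; exact le_max_left _ _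
      exact absurd (mem_Rem.mpr ⟨r, h1, h2, hx, by omega⟩) hxR'
    push_neg at hx
    obtain ⟨X, hX⟩ : ∃ X, (r - q) * t = X := ⟨_, rfl⟩
    have hub' : j q + X ≤ j r := by rw [← hX]; exact spread_mono hjs hq1 hr h2
    have hmx : j' r = max (j r) (j q + 1 + X) := by rw [hj'ge r hr, hX]
    have hjreq : j r = j q + X ∧ j' r = j q + 1 + X := by
      rcases le_or_gt (j q + 1 + X) (j r) with hc | hc
      · rw [max_eq_left hc] at hmx; omega
      · rw [max_eq_right (by omega)] at hmx; omega
    have hxeq : x = j q + X := by omega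
    rcases Nat.eq_or_lt_of_le hr with hrq | hrq
    · have : X = 0 := by rw [← hX, ← hrq, Nat.sub_self, Nat.zero_mul]
      omega
    · exfalso
      obtain ⟨Y, hY⟩ : ∃ Y, (r - 1 - q) * t = Y := ⟨_, rfl⟩
      have hXY : X = Y + t := by
        rw [← hX, ← hY, show r - q = (r - 1 - q) + 1 by omega, Nat.add_mul, one_mul]
      have hj'r1 : j' (r - 1) = max (j (r - 1)) (j q + 1 + Y) := by
        rw [hj'ge (r - 1) (by omega), hY]
      have hjr1 : j (r - 1) + t ≤ j r := hjs r (by omega) h2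
      have hmem : x ∈ Rem t j' (s - 1) := by
        refine mem_Rem.mpr ⟨r - 1, by omega, by omega, ?_, ?_⟩
        · rw [hj'r1]; exact max_le (by omega) (by omega)
        · have : j q + 1 + Y ≤ j' (r - 1) := by rw [hj'r1]; exact le_max_right _ _
          omega
      exact hxR' hmem
  have hdiff : (Finset.Icc 1 (i s) \ Rem t j' (s - 1)) \ (Finset.Icc 1 (i s) \ Rem t j (s - 1))
      = {j q} := by
    ext x
    simp only [Finset.mem_sdiff, Finset.mem_Icc, Finset.mem_singleton]
    constructor
    · rintro ⟨⟨⟨hx1, hx2⟩, hxR'⟩, hxW⟩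
      have hxR : x ∈ Rem t j (s - 1) := by
        by_contra hcon
        exact hxW ⟨⟨hx1, hx2⟩, hcon⟩
      exact hmain x hxR hxR'
    · rintro rfl
      exact ⟨⟨⟨hjq1, hjqle⟩, hjq_notR'⟩, fun hcon => hcon.2 hjq_inR⟩
  refine ⟨j', hbound, hspread, hdiff, j q, ?_, ?_, ?_⟩
  · exact Finset.mem_sdiff.mpr ⟨Finset.mem_Icc.mpr ⟨hjq1, hjqle⟩, hjq_notR'⟩
  · rw [Finset.mem_sdiff]; rintro ⟨_, hcon⟩; exact hcon hjq_inR
  · intro p hp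
    have hRiff : p ∈ Rem t j' (s - 1) ↔ p ∈ Rem t j (s - 1) := by
      constructor
      · rw [mem_Rem, mem_Rem]
        rintro ⟨r, h1, h2, h3, h4⟩
        by_cases hr : r < q
        · exact ⟨r, h1, h2, by rwa [hj'lt r hr] at h3, by rwa [hj'lt r hr] at h4⟩
        · push_neg at hr
          have h5 : j q + 1 ≤ j' r := by
            rw [hj'ge r hr]
            exact le_trans (Nat.le_add_right _ _) (le_max_right _ _)
          have h6 : j q + 1 ≤ p := le_trans h5 h3
          omega
      · rw [mem_Rem, mem_Rem]
        rintro ⟨r, h1, h2, h3, h4⟩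
        by_cases hr : r < q
        · exact ⟨r, h1, h2, by rwa [hj'lt r hr], by rwa [hj'lt r hr]⟩
        · push_neg at hr
          have h5 : j q ≤ j r := spread_le hjs hq1 hr h2
          omega
    rw [Finset.mem_sdiff, Finset.mem_sdiff]
    constructor
    · rintro ⟨ha, hb⟩; exact ⟨ha, fun hcon => hb (hRiff.mpr hcon)⟩
    · rintro ⟨ha, hb⟩; exact ⟨ha, fun hcon => hb (hRiff.mp hcon)⟩


-- TRUNCATION construction
lemma trunc {t d : ℕ} (ht : 1 ≤ t) {i : ℕ → ℕ}
    (hi1 : ∀ l, 1 ≤ l → l ≤ d → 1 ≤ i l)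
    (his : ∀ l, 2 ≤ l → l ≤ d → i (l - 1) + t ≤ i l)
    {s : ℕ} {j : ℕ → ℕ} (hs2 : 2 ≤ s) (hsd : s ≤ d)
    (hjb : ∀ r, 1 ≤ r → r ≤ s - 1 → 1 ≤ j r ∧ j r ≤ i r)
    (hjs : ∀ r, 2 ≤ r → r ≤ s - 1 → j (r - 1) + t ≤ j r)
    {q : ℕ} (hq1 : 1 ≤ q) (hqs : q ≤ s - 1) (heq : j q = i q) :
    (Finset.Icc 1 (i q) \ Rem t j (q - 1)) \ (Finset.Icc 1 (i s) \ Rem t j (s - 1)) = {i q} ∧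
    LexGT (Finset.Icc 1 (i q) \ Rem t j (q - 1)) (Finset.Icc 1 (i s) \ Rem t j (s - 1)) := by
  have hiq1 : 1 ≤ i q := hi1 q hq1 (by omega)
  have hiqs : i q ≤ i s := spread_le his hq1 (by omega) hsd
  have hiq_not : i q ∉ Rem t j (q - 1) := by
    rw [mem_Rem]; rintro ⟨r, h1, h2, h3, h4⟩
    have := spread_lt hjs h1 (show r < q by omega) hqs
    omega
  have hiq_R : i q ∈ Rem t j (s - 1) := mem_Rem.mpr ⟨q, hq1, hqs, by omega, by omega⟩
  have hiq_W' : i q ∈ Finset.Icc 1 (i q) \ Rem t j (q - 1) :=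
    Finset.mem_sdiff.mpr ⟨Finset.mem_Icc.mpr ⟨hiq1, le_rfl⟩, hiq_not⟩
  constructor
  · ext x
    simp only [Finset.mem_sdiff, Finset.mem_Icc, Finset.mem_singleton]
    constructor
    · rintro ⟨⟨⟨hx1, hx2⟩, hxR'⟩, hxW⟩
      have hxR : x ∈ Rem t j (s - 1) := by
        by_contra hcon
        exact hxW ⟨⟨hx1, by omega⟩, hcon⟩
      rw [mem_Rem] at hxR
      obtain ⟨r, h1, h2, h3, h4⟩ := hxR
      by_cases hr : r ≤ q - 1
      · exact absurd (mem_Rem.mpr ⟨r, h1, hr, h3, h4⟩) hxR'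
      · have h5 : j q ≤ j r := spread_le hjs hq1 (by omega) h2
        omega
    · rintro rfl
      exact ⟨⟨⟨hiq1, le_rfl⟩, hiq_not⟩, fun hcon => hcon.2 hiq_R⟩
  · refine ⟨i q, hiq_W', ?_, ?_⟩
    · rw [Finset.mem_sdiff]; rintro ⟨_, hcon⟩; exact hcon hiq_R
    · intro p hp
      rw [Finset.mem_sdiff, Finset.mem_sdiff, Finset.mem_Icc, Finset.mem_Icc]
      have hRiff : p ∈ Rem t j (q - 1) ↔ p ∈ Rem t j (s - 1) := by
        rw [mem_Rem, mem_Rem]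
        constructor
        · rintro ⟨r, h1, h2, h3, h4⟩; exact ⟨r, h1, by omega, h3, h4⟩
        · rintro ⟨r, h1, h2, h3, h4⟩
          refine ⟨r, h1, ?_, h3, h4⟩
          by_contra hr
          have h5 : j q ≤ j r := spread_le hjs hq1 (by omega) h2
          omega
      constructor
      · rintro ⟨⟨ha1, ha2⟩, hb⟩
        exact ⟨⟨ha1, by omega⟩, fun hcon => hb (hRiff.mpr hcon)⟩
      · rintro ⟨⟨ha1, ha2⟩, hb⟩
        exact ⟨⟨ha1, by omega⟩, fun hcon => hb (hRiff.mp hcon)⟩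

-- KEY LEMMA
lemma key {t d : ℕ} (ht : 1 ≤ t) {i : ℕ → ℕ}
    (hi1 : ∀ l, 1 ≤ l → l ≤ d → 1 ≤ i l)
    (his : ∀ l, 2 ≤ l → l ≤ d → i (l - 1) + t ≤ i l)
    {s : ℕ} {j : ℕ → ℕ} (hs2 : 2 ≤ s) (hsd : s ≤ d)
    (hjb : ∀ r, 1 ≤ r → r ≤ s - 1 → 1 ≤ j r ∧ j r ≤ i r)
    (hjs : ∀ r, 2 ≤ r → r ≤ s - 1 → j (r - 1) + t ≤ j r)
    {Wg : Finset ℕ}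
    (hWg : Wg = Finset.Icc 1 (i 1) ∨
      (∃ σ h, 2 ≤ σ ∧ σ ≤ d ∧
        (∀ r, 1 ≤ r → r ≤ σ - 1 → 1 ≤ h r ∧ h r ≤ i r) ∧
        (∀ r, 2 ≤ r → r ≤ σ - 1 → h (r - 1) + t ≤ h r) ∧
        Wg = Finset.Icc 1 (i σ) \ Rem t h (σ - 1) ∧
        LexGT Wg (Finset.Icc 1 (i s) \ Rem t j (s - 1))) ∨
      (∃ σ h, 2 ≤ σ ∧ σ ≤ s - 1 ∧
        (∀ r, 1 ≤ r → r ≤ σ - 1 → 1 ≤ h r ∧ h r ≤ i r) ∧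
        (∀ r, 2 ≤ r → r ≤ σ - 1 → h (r - 1) + t ≤ h r) ∧
        Wg = Finset.Icc 1 (i σ) \ Rem t h (σ - 1))) :
    ∃ q, 1 ≤ q ∧ q ≤ s - 1 ∧ j q ∈ Wg := by
  classical
  rcases hWg with hA | hLex | hMidTop
  · -- Wg = [1, i 1]
    subst hA
    refine ⟨1, le_rfl, by omega, ?_⟩
    rw [Finset.mem_Icc]
    exact ⟨(hjb 1 le_rfl (by omega)).1, (hjb 1 le_rfl (by omega)).2⟩
  · -- LexGT case
    obtain ⟨σ, h, hσ2, hσd, hhb, hhs, hWgeq, hlex⟩ := hLex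
    subst hWgeq
    obtain ⟨m, hmWg, hmW, hmag⟩ := hlex
    rw [Finset.mem_sdiff, Finset.mem_Icc] at hmWg
    obtain ⟨⟨hm1, hmσ⟩, hmH⟩ := hmWg
    rw [Finset.mem_sdiff, Finset.mem_Icc] at hmW
    push_neg at hmW
    have hj1' : ∀ r, 1 ≤ r → r ≤ s - 1 → 1 ≤ j r := fun r a b => (hjb r a b).1
    have hh1' : ∀ r, 1 ≤ r → r ≤ σ - 1 → 1 ≤ h r := fun r a b => (hhb r a b).1
    by_cases hms : m ≤ i s
    · -- m is in a removed interval of W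
      have hmR : m ∈ Rem t j (s - 1) := hmW ⟨hm1, hms⟩
      have hmlt : m < i s := (Rem_bound ht his hs2 hsd hjb hmR).2
      obtain ⟨q, hq1, hq2, hq3, hq4⟩ := mem_Rem.mp hmR
      refine ⟨q, hq1, hq2, ?_⟩
      -- claim j q = m
      have hqm : j q = m := by
        by_contra hne
        have hjqm : j q < m := by omega
        set P : ℕ → Prop := fun y => ∀ z, y ≤ z → z < m → z ∈ Rem t j (s - 1) with hP
        have hPm : P m := fun z h1 h2 => absurd h2 (by omega)
        have hex : ∃ y, P y := ⟨m, hPm⟩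
        set a := Nat.find hex with ha
        have hPa : P a := Nat.find_spec hex
        have hPjq : P (j q) := fun z h1 h2 => mem_Rem.mpr ⟨q, hq1, hq2, h1, by omega⟩
        have haj : a ≤ j q := Nat.find_min' hex hPjq
        have ha1 : 1 ≤ a := by
          by_contra hcon
          have ha0 : a = 0 := by omega
          have h0 : (0 : ℕ) ∈ Rem t j (s - 1) := by
            have := hPa 0 (by omega) (by omega)
            exact this
          rw [mem_Rem] at h0
          obtain ⟨r, hr1, hr2, hr3, _⟩ := h0
          have := hj1' r hr1 hr2
          omega
        have haR : a - 1 ∉ Rem t j (s - 1) := by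
          intro hcon
          apply Nat.find_min hex (show a - 1 < a by omega)
          intro z hz1 hz2
          by_cases haz : a ≤ z
          · exact hPa z haz hz2
          · rwa [show z = a - 1 by omega]
        -- R-side tiling
        obtain ⟨c, hc⟩ := tile ht hj1' hjs ha1 haR q hq1 hq2 m hq3 hq4 (by omega)
          (fun y h1 h2 => hPa y h1 h2)
        -- m - 1 is in H via an interval ending exactly at m - 1
        have hm1R : m - 1 ∈ Rem t j (s - 1) := hPa (m - 1) (by omega) (by omega)
        have htrans : ∀ y, y < m → (y ∈ Rem t j (s - 1) ↔ y ∈ Rem t h (σ - 1)) :=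
          fun y hy => transfer hj1' hh1' hmag y hy (by omega) (by omega)
        have hm1H : m - 1 ∈ Rem t h (σ - 1) := (htrans (m - 1) (by omega)).mp hm1R
        obtain ⟨p, hp1, hp2, hp3, hp4⟩ := mem_Rem.mp hm1H
        have hpm : h p + t = m := by
          by_contra hcon
          have : m ∈ Rem t h (σ - 1) := mem_Rem.mpr ⟨p, hp1, hp2, by omega, by omega⟩
          exact hmH this
        have haH : a - 1 ∉ Rem t h (σ - 1) := by
          intro hcon
          exact haR ((htrans (a - 1) (by omega)).mpr hcon)
        obtain ⟨c', hc'⟩ := tile ht hh1' hhs ha1 haH p hp1 hp2 (m - 1) hp3 hp4 (by omega)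
          (fun y h1 h2 => (htrans y (by omega)).mp (hPa y h1 (by omega)))
        -- arithmetic contradiction
        have e1 : a + c * t < a + c' * t + t := by omega
        have e2 : a + c' * t + t ≤ a + c * t + t - 1 := by omega
        have f1 : c * t < (c' + 1) * t := by
          rw [Nat.add_mul, one_mul]; omega
        have f2 : c' * t < c * t := by omega
        have g1 : c < c' + 1 := Nat.lt_of_mul_lt_mul_right f1
        have g2 : c' < c := Nat.lt_of_mul_lt_mul_right f2
        omega
      rw [hqm, Finset.mem_sdiff, Finset.mem_Icc]
      exact ⟨⟨hm1, hmσ⟩, hmH⟩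
    · -- m > i s : derive a contradiction
      exfalso
      push_neg at hms
      have hσs : s < σ := by
        by_contra hcon
        push_neg at hcon
        have : i σ ≤ i s := spread_le his (by omega) hcon hsd
        omega
      have hisW : i s ∈ Finset.Icc 1 (i s) \ Rem t j (s - 1) := top_mem ht hi1 his hs2 hsd hjb
      have hisWg : i s ∈ Finset.Icc 1 (i σ) \ Rem t h (σ - 1) := (hmag (i s) (by omega)).mpr hisW
      have hisH : i s ∉ Rem t h (σ - 1) := (Finset.mem_sdiff.mp hisWg).2
      have hhss : h s ≤ i s := (hhb s (by omega) (by omega)).2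
      have hcase : h s + t - 1 < i s := by
        by_contra hcon
        push_neg at hcon
        exact hisH (mem_Rem.mpr ⟨s, by omega, by omega, hhss, by omega⟩)
      have htrans : ∀ y, y < m → y ≤ i s → (y ∈ Rem t j (s - 1) ↔ y ∈ Rem t h (σ - 1)) :=
        fun y hy hy2 => transfer (fun r a b => (hjb r a b).1) (fun r a b => (hhb r a b).1)
          hmag y hy hy2 (by
            have : i s ≤ i σ := spread_le his (by omega) (by omega) hσd
            omega)
      have hmem : ∀ r, 1 ≤ r → r ≤ s → h r ∈ Rem t j (s - 1) := by
        intro r h1 h2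
        have hhr : h r ∈ Rem t h (σ - 1) := mem_Rem.mpr ⟨r, h1, by omega, le_rfl, by omega⟩
        have hhrle : h r ≤ h s := spread_le hhs h1 h2 (by omega)
        have hhrlt : h r < i s := by omega
        exact (htrans (h r) (by omega) (by omega)).mpr hhr
      have := pig ht (s - 1) j hjs h s (fun r a b => hhs r a (by omega)) hmem
      omega
  · -- Wg TypeMid, W TypeTop (no lex)
    obtain ⟨σ, h, hσ2, hσs, hhb, hhs, hWgeq⟩ := hMidTop
    by_contra hno
    push_neg at hno
    have hmem : ∀ r, 1 ≤ r → r ≤ σ → j r ∈ Rem t h (σ - 1) := by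
      intro r h1 h2
      have hrs : r ≤ s - 1 := by omega
      have hjr := hjb r h1 hrs
      have hjiσ : j r ≤ i σ := by
        have : i r ≤ i σ := spread_le his h1 h2 (by omega)
        omega
      have hnW := hno r h1 hrs
      rw [hWgeq, Finset.mem_sdiff, Finset.mem_Icc] at hnW
      push_neg at hnW
      exact hnW ⟨hjr.1, hjiσ⟩
    have := pig ht (σ - 1) h hhs j σ (fun r a b => hjs r a (by omega)) hmem
    omega


-- glue lemmas relating the Type predicates
lemma top_n_mem {t d n : ℕ} {i : ℕ → ℕ} (ht : 1 ≤ t) (hd : 2 ≤ d)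
    (hi1 : ∀ l, 1 ≤ l → l ≤ d → 1 ≤ i l)
    (his : ∀ l, 2 ≤ l → l ≤ d → i (l - 1) + t ≤ i l)
    (hn : i d = n) {W : Finset ℕ} (h : TypeTop t d n i W) : n ∈ W := by
  obtain ⟨j, hjb, hjs, hWeq⟩ := h
  have hm : i d ∈ Finset.Icc 1 (i d) \ Rem t j (d - 1) := top_mem ht hi1 his hd le_rfl hjb
  have hWeq2 : W = Finset.Icc 1 n \ Rem t j (d - 1) := hWeq
  rw [hWeq2, ← hn]
  exact hm

lemma mid_max_le {t d : ℕ} {i : ℕ → ℕ}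
    (his : ∀ l, 2 ≤ l → l ≤ d → i (l - 1) + t ≤ i l)
    {W : Finset ℕ} (h : TypeMid t d i W) : ∀ x ∈ W, x ≤ i (d - 1) := by
  obtain ⟨s, hs2, hsd, j, hjb, hjs, hWeq⟩ := h
  intro x hx
  rw [hWeq, Finset.mem_sdiff, Finset.mem_Icc] at hx
  have : i s ≤ i (d - 1) := spread_le his (by omega) hsd (by omega)
  omega

lemma mid_not_top {t d n : ℕ} {i : ℕ → ℕ} (ht : 1 ≤ t) (hd : 2 ≤ d)
    (hi1 : ∀ l, 1 ≤ l → l ≤ d → 1 ≤ i l)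
    (his : ∀ l, 2 ≤ l → l ≤ d → i (l - 1) + t ≤ i l)
    (hn : i d = n) {W : Finset ℕ} (hM : TypeMid t d i W) (hT : TypeTop t d n i W) :
    False := by
  have h1 : n ∈ W := top_n_mem ht hd hi1 his hn hT
  have h2 : n ≤ i (d - 1) := mid_max_le his hM n h1
  have h3 : i (d - 1) + t ≤ i d := his d hd le_rfl
  omega

lemma mid_not_A {t d : ℕ} {i : ℕ → ℕ} (ht : 1 ≤ t)
    (hi1 : ∀ l, 1 ≤ l → l ≤ d → 1 ≤ i l)
    (his : ∀ l, 2 ≤ l → l ≤ d → i (l - 1) + t ≤ i l)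
    {W : Finset ℕ} (hM : TypeMid t d i W) (hA : TypeA (i 1) W) : False := by
  obtain ⟨s, hs2, hsd, j, hjb, hjs, hWeq⟩ := hM
  have hm : i s ∈ Finset.Icc 1 (i s) \ Rem t j (s - 1) :=
    top_mem ht hi1 his hs2 (by omega) hjb
  have hWeq2 : W = Finset.Icc 1 (i s) \ Rem t j (s - 1) := hWeq
  rw [← hWeq2] at hm
  rw [hA, Finset.mem_Icc] at hm
  have : i 1 + t ≤ i s := spread_lt his le_rfl (by omega) (by omega)
  omega

lemma top_not_A {t d n : ℕ} {i : ℕ → ℕ} (ht : 1 ≤ t) (hd : 2 ≤ d)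
    (hi1 : ∀ l, 1 ≤ l → l ≤ d → 1 ≤ i l)
    (his : ∀ l, 2 ≤ l → l ≤ d → i (l - 1) + t ≤ i l)
    (hn : i d = n) {W : Finset ℕ} (hT : TypeTop t d n i W) (hA : TypeA (i 1) W) :
    False := by
  have h1 : n ∈ W := top_n_mem ht hd hi1 his hn hT
  rw [hA, Finset.mem_Icc] at h1
  have : i 1 + t ≤ i d := spread_lt his le_rfl (by omega) le_rfl
  omega


end LinQuotAux

theorem dual_has_linear_quotients
    (t d n : ℕ) (ht : 1 ≤ t) (hd : 2 ≤ d)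
    (i : ℕ → ℕ) (hi : IsTSpread t d i) (hn : i d = n) :
    ∀ W Wg : Finset ℕ, DualGen t d n i W → DualGen t d n i Wg →
      Earlier t d n i Wg W →
      ∃ (W' : Finset ℕ) (l : ℕ), DualGen t d n i W' ∧ Earlier t d n i W' W ∧
        W' \ W = {l} ∧ l ∈ Wg ∧ l ∉ W := by
  classical
  open LinQuotAux in
  obtain ⟨hi1, his⟩ := hi
  intro W Wg hDW hDWg hE
  have hWMT : TypeMid t d i W ∨ TypeTop t d n i W := by
    rcases hE with ⟨_, hnA⟩ | ⟨_, h2, _⟩ | ⟨_, h2⟩ | ⟨_, h2, _⟩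
    · rcases hDW with h | h | h
      · exact absurd h hnA
      · exact Or.inl h
      · exact Or.inr h
    · exact Or.inl h2
    · exact Or.inr h2
    · exact Or.inr h2
  rcases hWMT with hMid | hTop
  · -- W is of middle type
    have hMidW := hMid
    obtain ⟨s, hs2, hsd1, j, hjb, hjs, hWeq⟩ := hMid
    have hsd : s ≤ d := by omega
    have hWeq' : W = Finset.Icc 1 (i s) \ Rem t j (s - 1) := hWeq
    have hKey : ∃ q, 1 ≤ q ∧ q ≤ s - 1 ∧ j q ∈ Wg := by
      apply key ht hi1 his hs2 hsd hjb hjs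
      rcases hE with ⟨hA, _⟩ | ⟨hMg, _, hlex⟩ | ⟨_, hT⟩ | ⟨_, hT, _⟩
      · exact Or.inl hA
      · obtain ⟨σ, hσ2, hσd1, h, hhb, hhs, hWgeq⟩ := hMg
        exact Or.inr (Or.inl ⟨σ, h, hσ2, by omega, hhb, hhs, hWgeq,
          by rw [← hWeq']; exact hlex⟩)
      · exact absurd (mid_not_top ht hd hi1 his hn hMidW hT) (not_false)
      · exact absurd (mid_not_top ht hd hi1 his hn hMidW hT) (not_false)
    obtain ⟨q, hq1, hq2, hqWg⟩ := hKey
    have hjqle : j q ≤ i q := (hjb q hq1 hq2).2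
    have hlW : j q ∉ W := by
      rw [hWeq', Finset.mem_sdiff]
      rintro ⟨_, hcon⟩
      exact hcon (mem_Rem.mpr ⟨q, hq1, hq2, le_rfl, by omega⟩)
    rcases Nat.lt_or_ge (j q) (i q) with hlt | hge
    · -- shift construction
      obtain ⟨j', hb', hs', hdiff, hlex'⟩ := shift ht his hs2 hsd hjb hjs hq1 hq2 hlt
      refine ⟨Finset.Icc 1 (i s) \ Rem t j' (s - 1), j q, ?_, ?_, ?_, hqWg, hlW⟩
      · exact Or.inr (Or.inl ⟨s, hs2, hsd1, j', hb', hs', rfl⟩)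
      · exact Or.inr (Or.inl ⟨⟨s, hs2, hsd1, j', hb', hs', rfl⟩, hMidW,
          by rw [hWeq']; exact hlex'⟩)
      · rw [hWeq']; exact hdiff
    · -- truncation construction
      have heq : j q = i q := le_antisymm hjqle hge
      obtain ⟨hdiff, hlex'⟩ := trunc ht hi1 his hs2 hsd hjb hjs hq1 hq2 heq
      by_cases hq2' : 2 ≤ q
      · refine ⟨Finset.Icc 1 (i q) \ Rem t j (q - 1), i q, ?_, ?_, ?_,
          by rwa [heq] at hqWg, by rwa [heq] at hlW⟩
        · exact Or.inr (Or.inl ⟨q, hq2', by omega, j,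
            fun r a b => hjb r a (by omega), fun r a b => hjs r a (by omega), rfl⟩)
        · exact Or.inr (Or.inl ⟨⟨q, hq2', by omega, j,
            fun r a b => hjb r a (by omega), fun r a b => hjs r a (by omega), rfl⟩,
            hMidW, by rw [hWeq']; exact hlex'⟩)
        · rw [hWeq']; exact hdiff
      · have hq1' : q = 1 := by omega
        subst hq1'
        have hW'eq : Finset.Icc 1 (i 1) \ Rem t j (1 - 1) = Finset.Icc 1 (i 1) := by
          rw [show (1 : ℕ) - 1 = 0 from rfl, Rem_zero, Finset.sdiff_empty]
        refine ⟨Finset.Icc 1 (i 1), i 1, Or.inl rfl, ?_, ?_,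
          by rwa [heq] at hqWg, by rwa [heq] at hlW⟩
        · exact Or.inl ⟨rfl, fun hA => absurd (mid_not_A ht hi1 his hMidW hA) not_false⟩
        · rw [hWeq', ← hW'eq]; exact hdiff
  · -- W is of top type
    have hTopW := hTop
    obtain ⟨j, hjb, hjs, hWeq⟩ := hTop
    have hWeq' : W = Finset.Icc 1 (i d) \ Rem t j (d - 1) := by rw [hn]; exact hWeq
    have hKey : ∃ q, 1 ≤ q ∧ q ≤ d - 1 ∧ j q ∈ Wg := by
      apply key ht hi1 his hd le_rfl hjb hjs
      rcases hE with ⟨hA, _⟩ | ⟨hMg, hMW, _⟩ | ⟨hMg, _⟩ | ⟨hTg, _, hlex⟩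
      · exact Or.inl hA
      · exact absurd (mid_not_top ht hd hi1 his hn hMW hTopW) not_false
      · obtain ⟨σ, hσ2, hσd1, h, hhb, hhs, hWgeq⟩ := hMg
        exact Or.inr (Or.inr ⟨σ, h, hσ2, by omega, hhb, hhs, hWgeq⟩)
      · obtain ⟨h, hhb, hhs, hWgeq⟩ := hTg
        exact Or.inr (Or.inl ⟨d, h, hd, le_rfl, hhb, hhs, by rw [hn]; exact hWgeq,
          by rw [← hWeq']; exact hlex⟩)
    obtain ⟨q, hq1, hq2, hqWg⟩ := hKey
    have hjqle : j q ≤ i q := (hjb q hq1 hq2).2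
    have hlW : j q ∉ W := by
      rw [hWeq', Finset.mem_sdiff]
      rintro ⟨_, hcon⟩
      exact hcon (mem_Rem.mpr ⟨q, hq1, hq2, le_rfl, by omega⟩)
    rcases Nat.lt_or_ge (j q) (i q) with hlt | hge
    · -- shift construction
      obtain ⟨j', hb', hs', hdiff, hlex'⟩ := shift ht his hd le_rfl hjb hjs hq1 hq2 hlt
      refine ⟨Finset.Icc 1 (i d) \ Rem t j' (d - 1), j q, ?_, ?_, ?_, hqWg, hlW⟩
      · exact Or.inr (Or.inr ⟨j', hb', hs', by rw [← hn]; exact rfl⟩)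
      · exact Or.inr (Or.inr (Or.inr ⟨⟨j', hb', hs', by rw [← hn]; exact rfl⟩, hTopW,
          by rw [hWeq']; exact hlex'⟩))
      · rw [hWeq']; exact hdiff
    · -- truncation construction
      have heq : j q = i q := le_antisymm hjqle hge
      obtain ⟨hdiff, hlex'⟩ := trunc ht hi1 his hd le_rfl hjb hjs hq1 hq2 heq
      by_cases hq2' : 2 ≤ q
      · refine ⟨Finset.Icc 1 (i q) \ Rem t j (q - 1), i q, ?_, ?_, ?_,
          by rwa [heq] at hqWg, by rwa [heq] at hlW⟩
        · exact Or.inr (Or.inl ⟨q, hq2', by omega, j,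
            fun r a b => hjb r a (by omega), fun r a b => hjs r a (by omega), rfl⟩)
        · exact Or.inr (Or.inr (Or.inl ⟨⟨q, hq2', by omega, j,
            fun r a b => hjb r a (by omega), fun r a b => hjs r a (by omega), rfl⟩,
            hTopW⟩))
        · rw [hWeq']; exact hdiff
      · have hq1' : q = 1 := by omega
        subst hq1'
        have hW'eq : Finset.Icc 1 (i 1) \ Rem t j (1 - 1) = Finset.Icc 1 (i 1) := by
          rw [show (1 : ℕ) - 1 = 0 from rfl, Rem_zero, Finset.sdiff_empty]
        refine ⟨Finset.Icc 1 (i 1), i 1, Or.inl rfl, ?_, ?_,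
          by rwa [heq] at hqWg, by rwa [heq] at hlW⟩
        · exact Or.inl ⟨rfl, fun hA => absurd (top_not_A ht hd hi1 his hn hTopW hA) not_false⟩
        · rw [hWeq', ← hW'eq]; exact hdiff
end

section
/- Let t ≥ 1 and u a t-spread monomial. The t-spread principal Borel ideal B_t(u) satisfies the ℓ-exchange property with respect to the sorting order. -/
/-- The pair `(v, w)` of degree-`d` monomials is sorted:
`v_1 ≤ w_1 ≤ v_2 ≤ w_2 ≤ ⋯ ≤ v_d ≤ w_d`. -/
def SortedPair (d : ℕ) (v w : ℕ → ℕ) : Prop :=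
  (∀ l, 1 ≤ l → l ≤ d → v l ≤ w l) ∧ ∀ l, 1 ≤ l → l ≤ d - 1 → w l ≤ v (l + 1)

/-- The tuple `(f 1, …, f N)` is sorted (pairwise sorted in order). -/
def SortedTuple (d N : ℕ) (f : ℕ → ℕ → ℕ) : Prop :=
  ∀ a b, 1 ≤ a → a ≤ b → b ≤ N → SortedPair d (f a) (f b)

/-- The multiset of indices of the degree-`d` monomial `a`. -/
def mseq (d : ℕ) (a : ℕ → ℕ) : Multiset ℕ :=
  (Finset.Icc 1 d).val.map a

/-- `x_m`-degree of the product `(f 1) ⋯ (f N)` of degree-`d` monomials. -/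
def xdeg (d N : ℕ) (f : ℕ → ℕ → ℕ) (m : ℕ) : ℕ :=
  ∑ a ∈ Finset.Icc 1 N, ∑ l ∈ Finset.Icc 1 d, if f a l = m then 1 else 0

def cnt (d N : ℕ) (f : ℕ → ℕ → ℕ) (m : ℕ) : ℕ :=
  ∑ a ∈ Finset.Icc 1 N, ∑ l ∈ Finset.Icc 1 d, if f a l < m then 1 else 0

lemma cnt_succ (d N : ℕ) (f : ℕ → ℕ → ℕ) (m : ℕ) :
    cnt d N f (m + 1) = cnt d N f m + xdeg d N f m := by
  unfold cnt xdeg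
  rw [← Finset.sum_add_distrib]
  refine Finset.sum_congr rfl fun a _ => ?_
  rw [← Finset.sum_add_distrib]
  refine Finset.sum_congr rfl fun l _ => ?_
  split_ifs <;> omega

lemma cnt_le (d N : ℕ) (f : ℕ → ℕ → ℕ) (m : ℕ) : cnt d N f m ≤ N * d := by
  unfold cnt
  calc ∑ a ∈ Finset.Icc 1 N, ∑ l ∈ Finset.Icc 1 d, (if f a l < m then 1 else 0)
      ≤ ∑ _a ∈ Finset.Icc 1 N, ∑ _l ∈ Finset.Icc 1 d, 1 := by
        refine Finset.sum_le_sum fun a _ => Finset.sum_le_sum fun l _ => ?_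
        split_ifs <;> omega
    _ = N * d := by simp [Nat.card_Icc]

lemma tspread_mono (t d : ℕ) (ht : 1 ≤ t) (f : ℕ → ℕ) (hf : IsTSpread t d f) :
    ∀ l l', 1 ≤ l → l ≤ l' → l' ≤ d → f l ≤ f l' := by
  intro l l' h1 hll hd
  induction l' with
  | zero => omega
  | succ n ih =>
    rcases Nat.eq_or_lt_of_le hll with h | h
    · exact le_of_eq (by rw [h])
    · have hn : l ≤ n := by omega
      have h2 : f n + t ≤ f (n + 1) := by
        have := hf.2 (n + 1) (by omega) hd
        simpa using this
      have := ih hn (by omega)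
      omega

/-- entries are monotone along the linearized order of positions -/
lemma entry_le (t d N : ℕ) (ht : 1 ≤ t) (f : ℕ → ℕ → ℕ)
    (hgen : ∀ a, 1 ≤ a → a ≤ N → IsTSpread t d (f a))
    (hs : SortedTuple d N f)
    (a a' l l' : ℕ) (ha'1 : 1 ≤ a') (ha'N : a' ≤ N) (ha1 : 1 ≤ a) (haN : a ≤ N)
    (hl'1 : 1 ≤ l') (hl1 : 1 ≤ l) (hld : l ≤ d)
    (h : l' < l ∨ (l' = l ∧ a' ≤ a)) : f a' l' ≤ f a l := by
  rcases h with h | ⟨hl'l, h⟩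
  · rcases le_or_gt a' a with hcase | hcase
    · have h1 : f a' l' ≤ f a' l :=
        tspread_mono t d ht (f a') (hgen a' ha'1 ha'N) l' l hl'1 (by omega) hld
      have h2 : f a' l ≤ f a l := (hs a' a ha'1 hcase haN).1 l hl1 hld
      omega
    · have h1 : f a' l' ≤ f a (l' + 1) :=
        (hs a a' ha1 (by omega) ha'N).2 l' hl'1 (by omega)
      have h2 : f a (l' + 1) ≤ f a l :=
        tspread_mono t d ht (f a) (hgen a ha1 haN) (l' + 1) l (by omega) (by omega) hld
      omega
  · rw [hl'l]; exact (hs a' a ha'1 h haN).1 l hl1 hld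

lemma sum_ind_lt (d l : ℕ) (hld : l - 1 ≤ d) :
    ∑ l' ∈ Finset.Icc 1 d, (if l' < l then (1 : ℕ) else 0) = l - 1 := by
  rw [← Finset.card_filter]
  have : (Finset.Icc 1 d).filter (fun l' => l' < l) = Finset.Icc 1 (l - 1) := by
    ext x; simp only [Finset.mem_filter, Finset.mem_Icc]; omega
  rw [this, Nat.card_Icc]; omega

lemma claimA (t d N : ℕ) (ht : 1 ≤ t) (f : ℕ → ℕ → ℕ)
    (hgen : ∀ a, 1 ≤ a → a ≤ N → IsTSpread t d (f a))
    (hs : SortedTuple d N f)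
    (a l m : ℕ) (ha1 : 1 ≤ a) (haN : a ≤ N) (hl1 : 1 ≤ l) (hld : l ≤ d)
    (h : f a l < m) : (l - 1) * N + a ≤ cnt d N f m := by
  unfold cnt
  have hbound : ∀ a' ∈ Finset.Icc 1 N,
      (if a' ≤ a then l else l - 1) ≤ ∑ l' ∈ Finset.Icc 1 d, (if f a' l' < m then (1:ℕ) else 0) := by
    intro a' ha'
    rw [Finset.mem_Icc] at ha'
    by_cases hc : a' ≤ a
    · simp only [hc, if_true]
      calc l = ∑ l' ∈ Finset.Icc 1 d, (if l' < l + 1 then (1:ℕ) else 0) := by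
              rw [sum_ind_lt d (l+1) (by omega)]; omega
        _ ≤ ∑ l' ∈ Finset.Icc 1 d, (if f a' l' < m then (1:ℕ) else 0) := by
              refine Finset.sum_le_sum fun l' hl' => ?_
              rw [Finset.mem_Icc] at hl'
              by_cases hc2 : l' < l + 1
              · have : f a' l' ≤ f a l :=
                  entry_le t d N ht f hgen hs a a' l l' ha'.1 ha'.2 ha1 haN hl'.1 hl1 hld
                    (by omega)
                split_ifs <;> omega
              · split_ifs <;> omega
    · simp only [hc, if_false]
      calc l - 1 = ∑ l' ∈ Finset.Icc 1 d, (if l' < l then (1:ℕ) else 0) :=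
              (sum_ind_lt d l (by omega)).symm
        _ ≤ ∑ l' ∈ Finset.Icc 1 d, (if f a' l' < m then (1:ℕ) else 0) := by
              refine Finset.sum_le_sum fun l' hl' => ?_
              rw [Finset.mem_Icc] at hl'
              by_cases hc2 : l' < l
              · have : f a' l' ≤ f a l :=
                  entry_le t d N ht f hgen hs a a' l l' ha'.1 ha'.2 ha1 haN hl'.1 hl1 hld
                    (by omega)
                split_ifs <;> omega
              · split_ifs <;> omega
  calc (l - 1) * N + a
      = ∑ a' ∈ Finset.Icc 1 N, (if a' ≤ a then l else l - 1) := by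
        have : ∀ a' ∈ Finset.Icc 1 N, (if a' ≤ a then l else l - 1)
            = (l - 1) + (if a' < a + 1 then (1:ℕ) else 0) := by
          intro a' _; split_ifs <;> omega
        rw [Finset.sum_congr rfl this, Finset.sum_add_distrib, Finset.sum_const,
          Nat.card_Icc, sum_ind_lt N (a+1) (by omega)]
        simp [Nat.mul_comm]
    _ ≤ _ := Finset.sum_le_sum hbound

lemma claimB (t d N : ℕ) (ht : 1 ≤ t) (f : ℕ → ℕ → ℕ)
    (hgen : ∀ a, 1 ≤ a → a ≤ N → IsTSpread t d (f a))
    (hs : SortedTuple d N f)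
    (a l m : ℕ) (ha1 : 1 ≤ a) (haN : a ≤ N) (hl1 : 1 ≤ l) (hld : l ≤ d)
    (h : m ≤ f a l) : cnt d N f m < (l - 1) * N + a := by
  unfold cnt
  have hbound : ∀ a' ∈ Finset.Icc 1 N,
      (∑ l' ∈ Finset.Icc 1 d, (if f a' l' < m then (1:ℕ) else 0))
        ≤ (if a' < a then l else l - 1) := by
    intro a' ha'
    rw [Finset.mem_Icc] at ha'
    by_cases hc : a' < a
    · simp only [hc, if_true]
      calc ∑ l' ∈ Finset.Icc 1 d, (if f a' l' < m then (1:ℕ) else 0)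
          ≤ ∑ l' ∈ Finset.Icc 1 d, (if l' < l + 1 then (1:ℕ) else 0) := by
            refine Finset.sum_le_sum fun l' hl' => ?_
            rw [Finset.mem_Icc] at hl'
            by_cases hc2 : l' < l + 1
            · split_ifs <;> omega
            · have : f a l ≤ f a' l' :=
                entry_le t d N ht f hgen hs a' a l' l ha1 haN ha'.1 ha'.2 hl1 hl'.1 hl'.2
                  (by omega)
              have h3 : ¬ f a' l' < m := by omega
              split_ifs <;> omega
        _ = l := by rw [sum_ind_lt d (l+1) (by omega)]; omega
    · simp only [hc, if_false]
      calc ∑ l' ∈ Finset.Icc 1 d, (if f a' l' < m then (1:ℕ) else 0)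
          ≤ ∑ l' ∈ Finset.Icc 1 d, (if l' < l then (1:ℕ) else 0) := by
            refine Finset.sum_le_sum fun l' hl' => ?_
            rw [Finset.mem_Icc] at hl'
            by_cases hc2 : l' < l
            · split_ifs <;> omega
            · have : f a l ≤ f a' l' :=
                entry_le t d N ht f hgen hs a' a l' l ha1 haN ha'.1 ha'.2 hl1 hl'.1 hl'.2
                  (by omega)
              have h3 : ¬ f a' l' < m := by omega
              split_ifs <;> omega
        _ = l - 1 := sum_ind_lt d l (by omega)
  have hsum : ∑ a' ∈ Finset.Icc 1 N, (if a' < a then l else l - 1)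
      = (l - 1) * N + (a - 1) := by
    have : ∀ a' ∈ Finset.Icc 1 N, (if a' < a then l else l - 1)
        = (l - 1) + (if a' < a then (1:ℕ) else 0) := by
      intro a' _; split_ifs <;> omega
    rw [Finset.sum_congr rfl this, Finset.sum_add_distrib, Finset.sum_const,
      Nat.card_Icc, sum_ind_lt N a (by omega)]
    simp [Nat.mul_comm]
  have := Finset.sum_le_sum hbound
  omega

theorem ell_exchange_property
    (t d N q : ℕ) (ht : 1 ≤ t) (hN : 1 ≤ N) (hq : 1 ≤ q)
    (i : ℕ → ℕ) (hi : IsTSpread t d i)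
    (u v : ℕ → ℕ → ℕ)
    (hu : ∀ a, 1 ≤ a → a ≤ N → IsGen t d i (u a))
    (hv : ∀ a, 1 ≤ a → a ≤ N → IsGen t d i (v a))
    (hsu : SortedTuple d N u) (hsv : SortedTuple d N v)
    (heq : ∀ m, 1 ≤ m → m < q → xdeg d N u m = xdeg d N v m)
    (hlt : xdeg d N u q < xdeg d N v q) :
    ∃ δ l, 1 ≤ δ ∧ δ ≤ N ∧ 1 ≤ l ∧ l ≤ d ∧ q < u δ l ∧
      ∃ w, IsGen t d i w ∧ (u δ l) ::ₘ mseq d w = q ::ₘ mseq d (u δ) := by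
  have hu' : ∀ a, 1 ≤ a → a ≤ N → IsTSpread t d (u a) := fun a h1 h2 => (hu a h1 h2).1
  have hv' : ∀ a, 1 ≤ a → a ≤ N → IsTSpread t d (v a) := fun a h1 h2 => (hv a h1 h2).1
  have hx0 : ∀ (f : ℕ → ℕ → ℕ), (∀ a, 1 ≤ a → a ≤ N → IsTSpread t d (f a)) →
      xdeg d N f 0 = 0 := by
    intro f hf
    refine Finset.sum_eq_zero fun a ha => Finset.sum_eq_zero fun l hl => ?_
    rw [Finset.mem_Icc] at ha hl
    have := (hf a ha.1 ha.2).1 l hl.1 hl.2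
    have hne : f a l ≠ 0 := by omega
    simp [hne]
  have key : ∀ m, m ≤ q → cnt d N u m = cnt d N v m := by
    intro m hm
    induction m with
    | zero => simp [cnt]
    | succ n ih =>
      rw [cnt_succ, cnt_succ, ih (by omega)]
      congr 1
      rcases Nat.eq_zero_or_pos n with h | h
      · subst h; rw [hx0 u hu', hx0 v hv']
      · exact heq n h (by omega)
  have hcu := cnt_succ d N u q
  have hcv := cnt_succ d N v q
  have hkq := key q le_rfl
  have hC : cnt d N u (q + 1) < cnt d N v (q + 1) := by omega
  obtain ⟨c, hc⟩ : ∃ c, c = cnt d N u (q + 1) := ⟨_, rfl⟩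
  set a := c % N + 1 with ha
  set l := c / N + 1 with hl
  have hN0 : 0 < N := hN
  have ha1 : 1 ≤ a := by omega
  have haN : a ≤ N := by have := Nat.mod_lt c hN0; omega
  have hl1 : 1 ≤ l := by rw [hl]; exact Nat.le_add_left 1 _
  have hdm := Nat.div_add_mod c N
  have hcM : c < N * d := by
    have := cnt_le d N v (q + 1); omega
  have hld : l ≤ d := by
    have hdiv : c / N < d := (Nat.div_lt_iff_lt_mul hN0).mpr (Nat.mul_comm N d ▸ hcM)
    omega
  have hidx : (l - 1) * N + a = c + 1 := by
    have h1 : (l - 1) * N = N * (c / N) := by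
      rw [hl, Nat.add_sub_cancel, Nat.mul_comm]
    omega
  have fact1 : q < u a l := by
    by_contra hcon
    push_neg at hcon
    have := claimA t d N ht u hu' hsu a l (q + 1) ha1 haN hl1 hld (by omega)
    omega
  have fact2 : v a l = q := by
    have h2 : v a l < q + 1 := by
      by_contra hcon
      push_neg at hcon
      have := claimB t d N ht v hv' hsv a l (q + 1) ha1 haN hl1 hld (by omega)
      omega
    have h3 : ¬ v a l < q := by
      intro hcon
      have hA := claimA t d N ht v hv' hsv a l q ha1 haN hl1 hld hcon
      omega
    omega
  have factL : 2 ≤ l → u a (l - 1) + t ≤ q := by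
    intro hl2
    have hvs : v a (l - 1) + t ≤ v a l := (hv' a ha1 haN).2 l (by omega) hld
    rw [fact2] at hvs
    have hv1 : 1 ≤ v a (l - 1) := (hv' a ha1 haN).1 (l - 1) (by omega) (by omega)
    have hA := claimA t d N ht v hv' hsv a (l - 1) (q - t + 1) ha1 haN (by omega)
      (by omega) (by omega)
    have hk := key (q - t + 1) (by omega)
    by_contra hcon
    have hB := claimB t d N ht u hu' hsu a (l - 1) (q - t + 1) ha1 haN (by omega)
      (by omega) (by omega)
    omega
  refine ⟨a, l, ha1, haN, hl1, hld, fact1,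
    (fun m => if m = l then q else u a m), ⟨⟨?_, ?_⟩, ?_⟩, ?_⟩
  · intro m h1 h2
    show 1 ≤ if m = l then q else u a m
    by_cases hm : m = l
    · rw [if_pos hm]; exact hq
    · rw [if_neg hm]; exact (hu' a ha1 haN).1 m h1 h2
  · intro m hm2 hmd
    show (if m - 1 = l then q else u a (m - 1)) + t ≤ if m = l then q else u a m
    by_cases hm : m = l
    · rw [if_pos hm, if_neg (show m - 1 ≠ l by omega)]
      have he : m - 1 = l - 1 := by omega
      rw [he]
      exact factL (by omega)
    · by_cases hm' : m - 1 = l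
      · rw [if_neg hm, if_pos hm']
        have hsp := (hu' a ha1 haN).2 m hm2 hmd
        rw [hm'] at hsp
        omega
      · rw [if_neg hm, if_neg hm']
        exact (hu' a ha1 haN).2 m hm2 hmd
  · intro m h1 h2
    show (if m = l then q else u a m) ≤ i m
    by_cases hm : m = l
    · rw [if_pos hm, hm]
      have := (hu a ha1 haN).2 l hl1 hld
      omega
    · rw [if_neg hm]; exact (hu a ha1 haN).2 m h1 h2
  · have hlmem : l ∈ (Finset.Icc 1 d).val := Finset.mem_val.mpr (by
      rw [Finset.mem_Icc]; omega)
    have hnd : ((Finset.Icc 1 d).val).Nodup := (Finset.Icc 1 d).nodup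
    unfold mseq
    rw [← Multiset.cons_erase hlmem, Multiset.map_cons, Multiset.map_cons]
    rw [if_pos rfl]
    have hrest : Multiset.map (fun m => if m = l then q else u a m)
        (((Finset.Icc 1 d).val).erase l) = Multiset.map (u a)
        (((Finset.Icc 1 d).val).erase l) := by
      refine Multiset.map_congr rfl fun x hx => ?_
      have hxne : x ≠ l := by
        intro hxl
        subst hxl
        exact (Multiset.Nodup.notMem_erase hnd) hx
      rw [if_neg hxne]
    rw [hrest]
    exact Multiset.cons_swap (u a l) q _
end

section
/- Let u_δ = x_{j_1}···x_{j_d} and v_δ = x_{ℓ_1}···x_{ℓ_d} be minimal generators of B_t(u) with j_1 = ℓ_1, ..., j_{μ-1} = ℓ_{μ-1}, and j_μ > ℓ_μ = q for some μ < d. If j_μ ∉ supp(v_δ), then x_q u_δ / x_{j_μ} is a t-spread monomial and lies in B_t(u); if j_μ ∈ supp(v_δ), then for any j ∈ supp(u_δ) \ supp(v_δ) with j > q, the monomial x_q u_δ / x_j lies in B_t(u). -/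
-- auxiliary interval lemmas
lemma icc_val_split (p m n : ℕ) (h1 : p ≤ m + 1) (h2 : m ≤ n) :
    (Finset.Icc p n).val = (Finset.Icc p m).val + (Finset.Icc (m+1) n).val := by
  have hdisj : Disjoint (Finset.Icc p m) (Finset.Icc (m+1) n) := by
    rw [Finset.disjoint_left]; intro x hx hy
    simp only [Finset.mem_Icc] at hx hy; omega
  have : Finset.Icc p n = (Finset.Icc p m).disjUnion (Finset.Icc (m+1) n) hdisj := by
    ext x; simp only [Finset.mem_Icc, Finset.disjUnion_eq_union, Finset.mem_union]; omega
  rw [this]; rfl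

lemma icc_val_cons (m n : ℕ) (h : m ≤ n) :
    (Finset.Icc m n).val = m ::ₘ (Finset.Icc (m+1) n).val := by
  rw [Finset.Icc_eq_cons_Ioc h, Finset.cons_val, Finset.Icc_add_one_left_eq_Ioc]

lemma icc_val_cons_right (m n : ℕ) (h : m ≤ n) (h1 : 1 ≤ n) :
    (Finset.Icc m n).val = n ::ₘ (Finset.Icc m (n-1)).val := by
  have hn : n = (n - 1) + 1 := by omega
  have h2 : Finset.Ico m n = Finset.Icc m (n-1) := by
    rw [← Finset.Ico_add_one_right_eq_Icc]
    exact congrArg (Finset.Ico m) (by omega)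
  rw [Finset.Icc_eq_cons_Ico h, Finset.cons_val, h2]

lemma icc_val_shift (m n : ℕ) (f : ℕ → ℕ) :
    ((Finset.Icc (m+1) (n+1)).val.map f) = (Finset.Icc m n).val.map (fun x => f (x+1)) := by
  have := Finset.map_add_right_Icc m n 1
  rw [← this, Finset.map_val, Multiset.map_map]
  rfl

-- monotonicity of t-spread sequences
lemma tsp_le {t d : ℕ} {a : ℕ → ℕ} (h : IsTSpread t d a) :
    ∀ l l', 1 ≤ l → l ≤ l' → l' ≤ d → a l ≤ a l' := by
  intro l l' h1 h2 h3
  induction l', h2 using Nat.le_induction with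
  | base => exact le_rfl
  | succ n hn ih =>
    have hstep := h.2 (n+1) (by omega) h3
    have : a l ≤ a n := ih (by omega)
    simp only [Nat.add_sub_cancel] at hstep
    omega

lemma tsp_lt {t d : ℕ} {a : ℕ → ℕ} (h : IsTSpread t d a) :
    ∀ l l', 1 ≤ l → l < l' → l' ≤ d → a l + t ≤ a l' := by
  intro l l' h1 h2 h3
  have h4 : a l ≤ a (l' - 1) := tsp_le h l (l' - 1) h1 (by omega) (by omega)
  have h5 := h.2 l' (by omega) h3
  omega

theorem exchange_step
    (t d q μ : ℕ) (ht : 1 ≤ t)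
    (i a b : ℕ → ℕ) (hi : IsTSpread t d i)
    (ha : IsGen t d i a) (hb : IsGen t d i b)
    (hμ1 : 1 ≤ μ) (hμ2 : μ < d)
    (hpre : ∀ l, 1 ≤ l → l < μ → a l = b l)
    (hq : b μ = q) (hgt : q < a μ) :
    -- case `j_μ ∉ supp(v_δ)`
    ((∀ l, 1 ≤ l → l ≤ d → b l ≠ a μ) →
      IsTSpread t d (fun l => if l = μ then q else a l) ∧
      IsGen t d i (fun l => if l = μ then q else a l)) ∧
    -- case `j_μ ∈ supp(v_δ)`
    ((∃ l, 1 ≤ l ∧ l ≤ d ∧ b l = a μ) →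
      ∀ j, (∃ l, 1 ≤ l ∧ l ≤ d ∧ a l = j) → (∀ l, 1 ≤ l → l ≤ d → b l ≠ j) →
        q < j →
        ∃ w, IsGen t d i w ∧ j ::ₘ mseq d w = q ::ₘ mseq d a) := by
  have hq1 : 1 ≤ q := by
    have := hb.1.1 μ hμ1 (le_of_lt hμ2); omega
  constructor
  · -- case 1
    intro _hns
    have hts : IsTSpread t d (fun l => if l = μ then q else a l) := by
      constructor
      · intro l h1 h2
        by_cases hl : l = μ
        · simp [hl, hq1]
        · simpa [hl] using ha.1.1 l h1 h2
      · intro l h2 h2d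
        by_cases hl : l = μ
        · -- goal: a (μ-1) + t ≤ q
          have hμ2' : 2 ≤ μ := by omega
          have hne : l - 1 ≠ μ := by omega
          simp only [if_pos hl, if_neg hne]
          rw [hl, hpre (μ - 1) (by omega) (by omega)]
          have := hb.1.2 μ hμ2' (le_of_lt hμ2)
          omega
        · by_cases hl' : l - 1 = μ
          · -- goal: q + t ≤ a l
            have hgap := ha.1.2 l h2 h2d
            rw [hl'] at hgap
            simp only [if_neg hl, if_pos hl']
            omega
          · simp only [if_neg hl, if_neg hl']
            exact ha.1.2 l h2 h2d
    refine ⟨hts, hts, ?_⟩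
    intro l h1 h2
    by_cases hl : l = μ
    · have := ha.2 μ hμ1 (le_of_lt hμ2)
      simp [hl]; omega
    · simpa [hl] using ha.2 l h1 h2
  · -- case 2
    intro hsupp j hjsupp hjnot hqj
    obtain ⟨ν, hν1, hνd, hbν⟩ := hsupp
    obtain ⟨l0, hl01, hl0d, hal0⟩ := hjsupp
    subst hal0
    -- basic facts
    have hμν : μ < ν := by
      by_contra hc
      have : b ν ≤ b μ := tsp_le hb.1 ν μ hν1 (by omega) (le_of_lt hμ2)
      omega
    have key : q + t ≤ a μ := by
      have := tsp_lt hb.1 μ ν hμ1 hμν hνd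
      omega
    have hμl0 : μ < l0 := by
      rcases Nat.lt_or_ge l0 μ with hlt | hge
      · exact absurd (hpre l0 hl01 hlt).symm (hjnot l0 hl01 hl0d)
      · rcases Nat.eq_or_lt_of_le hge with heq | hlt
        · exfalso; exact hjnot ν hν1 hνd (heq ▸ hbν)
        · exact hlt
    set w : ℕ → ℕ := fun l => if l = μ then q else if l ≤ l0 ∧ μ < l then a (l - 1) else a l with hw
    have hw_lt : ∀ l, l < μ → w l = a l := by
      intro l hl; simp only [hw]
      rw [if_neg (by omega), if_neg (by omega)]
    have hw_μ : w μ = q := by simp [hw]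
    have hw_mid : ∀ l, μ < l → l ≤ l0 → w l = a (l - 1) := by
      intro l h1 h2; simp only [hw]
      rw [if_neg (by omega), if_pos ⟨h2, h1⟩]
    have hw_gt : ∀ l, l0 < l → w l = a l := by
      intro l hl; simp only [hw]
      rw [if_neg (by omega), if_neg (by omega)]
    have hgen : IsGen t d i w := by
      refine ⟨⟨?_, ?_⟩, ?_⟩
      · intro l h1 h2
        rcases Nat.lt_or_ge l μ with h | h
        · rw [hw_lt l h]; exact ha.1.1 l h1 h2
        · rcases Nat.eq_or_lt_of_le h with h' | h'
          · rw [← h', hw_μ]; exact hq1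
          · rcases le_or_gt l l0 with h'' | h''
            · rw [hw_mid l h' h'']
              exact ha.1.1 (l - 1) (by omega) (by omega)
            · rw [hw_gt l h'']; exact ha.1.1 l h1 h2
      · intro l h2 h2d
        rcases Nat.lt_or_ge l μ with h | h
        · rw [hw_lt l h, hw_lt (l-1) (by omega)]
          exact ha.1.2 l h2 h2d
        · rcases Nat.eq_or_lt_of_le h with h' | h'
          · -- l = μ : a (μ-1) + t ≤ q
            rw [← h', hw_μ, hw_lt (μ-1) (by omega)]
            rw [hpre (μ - 1) (by omega) (by omega)]
            have := hb.1.2 μ (by omega) (le_of_lt hμ2)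
            omega
          · rcases le_or_gt l l0 with h'' | h''
            · rw [hw_mid l h' h'']
              rcases Nat.eq_or_lt_of_le (Nat.succ_le_of_lt h') with h3 | h3
              · -- l = μ + 1 : q + t ≤ a μ
                rw [(by omega : l - 1 = μ), hw_μ]
                exact key
              · rw [hw_mid (l-1) (by omega) (by omega)]
                exact ha.1.2 (l - 1) (by omega) (by omega)
            · rw [hw_gt l h'']
              rcases Nat.eq_or_lt_of_le (Nat.succ_le_of_lt h'') with h3 | h3
              · -- l = l0 + 1
                rw [(by omega : l - 1 = l0), hw_mid l0 hμl0 le_rfl]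
                have h4 := ha.1.2 l0 (by omega) hl0d
                have h5 : a l0 ≤ a l := tsp_le ha.1 l0 l hl01 (by omega) h2d
                omega
              · rw [hw_gt (l-1) (by omega)]
                exact ha.1.2 l h2 h2d
      · intro l h1 h2
        rcases Nat.lt_or_ge l μ with h | h
        · rw [hw_lt l h]; exact ha.2 l h1 h2
        · rcases Nat.eq_or_lt_of_le h with h' | h'
          · rw [← h', hw_μ]
            have := ha.2 μ hμ1 (le_of_lt hμ2)
            omega
          · rcases le_or_gt l l0 with h'' | h''
            · rw [hw_mid l h' h'']
              have h3 : a (l - 1) ≤ a l := tsp_le ha.1 (l-1) l (by omega) (by omega) h2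
              have := ha.2 l h1 h2
              omega
            · rw [hw_gt l h'']; exact ha.2 l h1 h2
    refine ⟨w, hgen, ?_⟩
    -- multiset identity
    have split1 : (Finset.Icc 1 d).val
        = (Finset.Icc 1 (μ-1)).val + (Finset.Icc μ l0).val + (Finset.Icc (l0+1) d).val := by
      rw [icc_val_split 1 l0 d (by omega) hl0d,
          icc_val_split 1 (μ-1) l0 (by omega) (by omega),
          (by omega : μ - 1 + 1 = μ)]
    have conμ : (Finset.Icc μ l0).val = μ ::ₘ (Finset.Icc (μ+1) l0).val :=
      icc_val_cons μ l0 (by omega)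
    have conr : (Finset.Icc μ l0).val = l0 ::ₘ (Finset.Icc μ (l0-1)).val :=
      icc_val_cons_right μ l0 (by omega) (by omega)
    have e1 : (Finset.Icc 1 (μ-1)).val.map w = (Finset.Icc 1 (μ-1)).val.map a := by
      apply Multiset.map_congr rfl
      intro x hx
      rw [← Finset.mem_def, Finset.mem_Icc] at hx
      exact hw_lt x (by omega)
    have e3 : (Finset.Icc (l0+1) d).val.map w = (Finset.Icc (l0+1) d).val.map a := by
      apply Multiset.map_congr rfl
      intro x hx
      rw [← Finset.mem_def, Finset.mem_Icc] at hx
      exact hw_gt x (by omega)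
    have e2 : (Finset.Icc (μ+1) l0).val.map w = (Finset.Icc μ (l0-1)).val.map a := by
      rw [(by omega : l0 = (l0 - 1) + 1), icc_val_shift μ (l0-1) w]
      apply Multiset.map_congr rfl
      intro x hx
      rw [← Finset.mem_def, Finset.mem_Icc] at hx
      rw [hw_mid (x+1) (by omega) (by omega)]
      simp
    unfold mseq
    rw [split1]
    simp only [Multiset.map_add]
    rw [e1, e3]
    conv_lhs => rw [conμ]
    conv_rhs => rw [conr]
    simp only [Multiset.map_cons, hw_μ, e2]
    simp only [← Multiset.singleton_add]
    abel
end

section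
/- With the notation of the depth theorem (t ≥ 1, u = x_{i_1}···x_{i_d}, i_1 ≥ t+1, i_d = n), the monomials v_1 = x_1 x_{t+1} ··· x_{(d-2)t+1} x_n, v_2 = x_1 x_{t+1} ··· x_{(d-3)t+1} x_{i_{d-1}} x_n, ..., v_{d-1} = x_1 x_{i_2} ··· x_{i_{d-1}} x_n, v_d = u all belong to G(B_t(u)); moreover for w = v_1···v_d u^{k-d} ∈ G(I^k) with k ≥ d and for each j ∈ [n-1], there is a monomial w' ∈ G(I^k) with w' >_lex w and x_j w = x_{i_s} w' where i_{s-1} ≤ j < i_s (setting i_0 = 1). -/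
/-- Exponent vector of the degree-`d` monomial with index sequence `a`. -/
noncomputable def genExp (d : ℕ) (a : ℕ → ℕ) : ℕ →₀ ℕ :=
  ∑ l ∈ Finset.Icc 1 d, Finsupp.single (a l) 1

/-- `A >_lex B` for exponent vectors (lexicographic, `x_1 > x_2 > ⋯`). -/
def LexGTexp (A B : ℕ →₀ ℕ) : Prop :=
  ∃ m, B m < A m ∧ ∀ p, p < m → A p = B p

/-- Lower bound `i l ≥ l·t + 1` for a `t`-spread sequence with `i 1 ≥ t+1`. -/
lemma i_lower {t d : ℕ} {i : ℕ → ℕ} (hi : IsTSpread t d i) (h1 : t + 1 ≤ i 1) :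
    ∀ l, 1 ≤ l → l ≤ d → l * t + 1 ≤ i l := by
  intro l hl1 hld
  induction l with
  | zero => omega
  | succ m ih =>
    rcases Nat.lt_or_ge 1 (m + 1) with h | h
    · have hm1 : 1 ≤ m := by omega
      have h2 := hi.2 (m + 1) (by omega) hld
      simp only [Nat.add_sub_cancel] at h2
      have h3 := ih hm1 (by omega)
      have h4 : (m + 1) * t = m * t + t := by ring
      linarith
    · have hm0 : m = 0 := by omega
      subst hm0
      simpa using h1

theorem depth_witness_monomials
    (t d n k : ℕ) (ht : 1 ≤ t) (hd : 2 ≤ d) (hk : d ≤ k)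
    (i : ℕ → ℕ) (hi : IsTSpread t d i) (h0 : i 0 = 1) (h1 : t + 1 ≤ i 1)
    (hn : i d = n)
    (v : ℕ → ℕ → ℕ)
    (hv : ∀ m l, v m l =
      if l ≤ d - m then (l - 1) * t + 1 else if l < d then i l else n) :
    (∀ m, 1 ≤ m → m ≤ d → IsGen t d i (v m)) ∧
    (∀ w : ℕ →₀ ℕ,
      w = (∑ m ∈ Finset.Icc 1 d, genExp d (v m)) + (k - d) • genExp d i →
      ∀ j, 1 ≤ j → j ≤ n - 1 →
        ∃ s, 1 ≤ s ∧ s ≤ d ∧ i (s - 1) ≤ j ∧ j < i s ∧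
          ∃ f : ℕ → ℕ → ℕ,
            (∀ a, 1 ≤ a → a ≤ k → IsGen t d i (f a)) ∧
            LexGTexp (∑ a ∈ Finset.Icc 1 k, genExp d (f a)) w ∧
            Finsupp.single j 1 + w =
              Finsupp.single (i s) 1 + ∑ a ∈ Finset.Icc 1 k, genExp d (f a)) := by
  classical
  have hilow := i_lower hi h1
  -- simplified formula for v (valid for l ≤ d)
  have hv2 : ∀ m l, l ≤ d → v m l = if l ≤ d - m then (l - 1) * t + 1 else i l := by
    intro m l hld
    rw [hv]
    rcases Nat.lt_or_ge l d with h | h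
    · simp [h]
    · have hled : l = d := by omega
      subst hled
      split_ifs with h2 h3
      · rfl
      · omega
      · exact hn.symm
  have part1 : ∀ m, 1 ≤ m → m ≤ d → IsGen t d i (v m) := by
    intro m hm1 hmd
    refine ⟨⟨?_, ?_⟩, ?_⟩
    · intro l h1l hld
      rw [hv2 m l hld]
      split_ifs with h
      · exact Nat.le_add_left 1 _
      · exact hi.1 l h1l hld
    · intro l h2l hld
      have e1 : (l - 1) * t = (l - 1 - 1) * t + t := by
        conv_lhs => rw [show l - 1 = (l - 1 - 1) + 1 from by omega]
        rw [Nat.succ_mul]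
      have e2 : (l - 1) * t ≤ l * t := Nat.mul_le_mul_right _ (by omega)
      have hil := hilow l (by omega) hld
      rw [hv2 m l hld, hv2 m (l - 1) (by omega)]
      split_ifs with ha hb hc
      · linarith
      · linarith
      · omega
      · exact hi.2 l h2l hld
    · intro l h1l hld
      rw [hv2 m l hld]
      split_ifs with h
      · have hil := hilow l h1l hld
        have e2 : (l - 1) * t ≤ l * t := Nat.mul_le_mul_right _ (by omega)
        linarith
      · exact le_rfl
  refine ⟨part1, ?_⟩
  intro w hw j hj1 hjn
  have hnlow : d * t + 1 ≤ n := by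
    have := hilow d (by omega) le_rfl
    linarith
  have h2dt : 2 ≤ d * t := by
    have := Nat.mul_le_mul hd ht
    simpa using this
  have hn3 : 3 ≤ n := by linarith
  have hjn' : j < n := by omega
  have hex : ∃ s, j < i s := ⟨d, by omega⟩
  set s := Nat.find hex with hs_def
  have hsspec : j < i s := Nat.find_spec hex
  have hPd : j < i d := by omega
  have hsd : s ≤ d := Nat.find_le hPd
  have hs1 : 1 ≤ s := by
    by_contra hcon
    have hs0 : s = 0 := by omega
    rw [hs0, h0] at hsspec
    omega
  have hprev : i (s - 1) ≤ j := by
    have hmin := Nat.find_min hex (show s - 1 < s by omega)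
    omega
  refine ⟨s, hs1, hsd, hprev, hsspec, ?_⟩
  set m0 := d - s + 1 with hm0_def
  have hm01 : 1 ≤ m0 := by omega
  have hm0d : m0 ≤ d := by omega
  have hdm0 : d - m0 = s - 1 := by omega
  set v' : ℕ → ℕ := fun l => if l ≤ s - 1 then (l - 1) * t + 1 else if l = s then j else i l
    with hv'def
  have hv'small : ∀ l, l ≤ s - 1 → v' l = (l - 1) * t + 1 := by
    intro l h; simp only [hv'def]; rw [if_pos h]
  have hv's : v' s = j := by
    simp only [hv'def]; rw [if_neg (show ¬ s ≤ s - 1 by omega)]; simp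
  have hv'big : ∀ l, s < l → v' l = i l := by
    intro l h; simp only [hv'def]; rw [if_neg (by omega), if_neg (by omega)]
  have hvm0 : ∀ l, l ≤ d → l ≠ s → v m0 l = v' l := by
    intro l hld hne
    rw [hv2 m0 l hld, hdm0]
    rcases Nat.lt_or_ge l s with h | h
    · rw [if_pos (by omega), hv'small l (by omega)]
    · rw [if_neg (by omega), hv'big l (by omega)]
  have hvm0s : v m0 s = i s := by
    rw [hv2 m0 s hsd, hdm0, if_neg (by omega)]
  -- v' is a minimal generator
  have hgen' : IsGen t d i v' := by
    refine ⟨⟨?_, ?_⟩, ?_⟩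
    · intro l h1l hld
      simp only [hv'def]
      split_ifs
      · exact Nat.le_add_left 1 _
      · exact hj1
      · exact hi.1 l h1l hld
    · intro l h2l hld
      rcases Nat.lt_or_ge l s with hcase | hcase
      · rw [hv'small l (by omega), hv'small (l - 1) (by omega)]
        have e1 : (l - 1) * t = (l - 1 - 1) * t + t := by
          conv_lhs => rw [show l - 1 = (l - 1 - 1) + 1 from by omega]
          rw [Nat.succ_mul]
        linarith
      rcases Nat.eq_or_lt_of_le hcase with heq | hcase2
      · rw [← heq] at h2l hld ⊢
        rw [hv's, hv'small (s - 1) (by omega)]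
        have h3 := hilow (s - 1) (by omega) (by omega)
        have e1 : (s - 1) * t = (s - 1 - 1) * t + t := by
          conv_lhs => rw [show s - 1 = (s - 1 - 1) + 1 from by omega]
          rw [Nat.succ_mul]
        linarith
      rcases Nat.eq_or_lt_of_le (show s + 1 ≤ l by omega) with heq2 | hcase3
      · have hl1s : l - 1 = s := by omega
        rw [hv'big l (by omega), hl1s, hv's]
        have hsp := hi.2 l h2l hld
        rw [hl1s] at hsp
        omega
      · rw [hv'big l (by omega), hv'big (l - 1) (by omega)]
        exact hi.2 l h2l hld
    · intro l h1l hld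
      rcases Nat.lt_or_ge l s with hcase | hcase
      · rw [hv'small l (by omega)]
        have hil := hilow l h1l hld
        have e2 : (l - 1) * t ≤ l * t := Nat.mul_le_mul_right _ (by omega)
        linarith
      rcases Nat.eq_or_lt_of_le hcase with heq | h2
      · rw [← heq] at hld ⊢
        rw [hv's]
        omega
      · rw [hv'big l h2]
  set f : ℕ → ℕ → ℕ := fun a => if a = m0 then v' else if a ≤ d then v a else i with hfdef
  have hf_m0 : f m0 = v' := by simp only [hfdef]; simp
  have hf_v : ∀ a, a ≠ m0 → a ≤ d → f a = v a := by
    intro a ha1 ha2; simp only [hfdef]; rw [if_neg ha1, if_pos ha2]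
  have hf_i : ∀ a, d < a → f a = i := by
    intro a h; simp only [hfdef]; rw [if_neg (by omega), if_neg (by omega)]
  have hm0mem : m0 ∈ Finset.Icc 1 d := Finset.mem_Icc.mpr ⟨hm01, hm0d⟩
  have hsmem : s ∈ Finset.Icc 1 d := Finset.mem_Icc.mpr ⟨hs1, hsd⟩
  have hgen_vm0 : genExp d (v m0)
      = Finsupp.single (i s) 1
        + ∑ l ∈ (Finset.Icc 1 d).erase s, Finsupp.single (v m0 l) 1 := by
    rw [genExp, ← Finset.add_sum_erase _ _ hsmem, hvm0s]
  have hgen_v' : genExp d v'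
      = Finsupp.single j 1
        + ∑ l ∈ (Finset.Icc 1 d).erase s, Finsupp.single (v m0 l) 1 := by
    rw [genExp, ← Finset.add_sum_erase _ _ hsmem, hv's]
    congr 1
    refine Finset.sum_congr rfl ?_
    intro l hl
    have hl' := Finset.mem_erase.mp hl
    have hmem := Finset.mem_Icc.mp hl'.2
    rw [hvm0 l hmem.2 hl'.1]
  have hsum_split : (∑ a ∈ Finset.Icc 1 k, genExp d (f a))
      = (∑ a ∈ Finset.Icc 1 d, genExp d (f a)) + (k - d) • genExp d i := by
    have h01 : Finset.Icc 1 k = Finset.Ioc 0 k := by ext x; simp; omega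
    have h02 : Finset.Icc 1 d = Finset.Ioc 0 d := by ext x; simp; omega
    rw [h01, h02, ← Finset.sum_Ioc_consecutive _ (Nat.zero_le d) hk]
    congr 1
    rw [Finset.sum_congr rfl (fun a ha => by
      rw [hf_i a (Finset.mem_Ioc.mp ha).1]), Finset.sum_const, Nat.card_Ioc]
  have hmidf : (∑ a ∈ Finset.Icc 1 d, genExp d (f a))
      = genExp d v' + ∑ a ∈ (Finset.Icc 1 d).erase m0, genExp d (v a) := by
    rw [← Finset.add_sum_erase _ _ hm0mem, hf_m0]
    congr 1
    refine Finset.sum_congr rfl ?_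
    intro a ha
    have ha' := Finset.mem_erase.mp ha
    rw [hf_v a ha'.1 (Finset.mem_Icc.mp ha'.2).2]
  have hmidv : (∑ a ∈ Finset.Icc 1 d, genExp d (v a))
      = genExp d (v m0) + ∑ a ∈ (Finset.Icc 1 d).erase m0, genExp d (v a) :=
    (Finset.add_sum_erase _ _ hm0mem).symm
  have heq : Finsupp.single j 1 + w
      = Finsupp.single (i s) 1 + ∑ a ∈ Finset.Icc 1 k, genExp d (f a) := by
    rw [hw, hmidv, hgen_vm0, hsum_split, hmidf, hgen_v']
    abel
  have happ : ∀ p, (Finsupp.single j 1 : ℕ →₀ ℕ) p + w p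
      = (Finsupp.single (i s) 1 : ℕ →₀ ℕ) p
        + (∑ a ∈ Finset.Icc 1 k, genExp d (f a)) p := by
    intro p
    rw [← Finsupp.add_apply, ← Finsupp.add_apply, heq]
  refine ⟨f, ?_, ⟨j, ?_, ?_⟩, heq⟩
  · intro a ha1 hak
    by_cases h : a = m0
    · rw [h, hf_m0]; exact hgen'
    · by_cases h2 : a ≤ d
      · rw [hf_v a h h2]; exact part1 a ha1 h2
      · rw [hf_i a (by omega)]
        exact ⟨hi, fun l _ _ => le_rfl⟩
  · have h := happ j
    rw [Finsupp.single_apply, Finsupp.single_apply,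
      if_pos rfl, if_neg (show ¬ i s = j by omega)] at h
    omega
  · intro p hp
    have h := happ p
    rw [Finsupp.single_apply, Finsupp.single_apply,
      if_neg (show ¬ j = p by omega), if_neg (show ¬ i s = p by omega)] at h
    omega
end

section
/- Let I be the t-spread Veronese ideal generated by u = x_t x_{2t} ··· x_{dt} in S = K[x_1,...,x_{dt}]. For every k ≥ 1, every j ∈ supp(u) = {t, 2t, ..., dt}, and every pair of monomials μ, μ' ∈ I^k that are products of k minimal generators, there is no integer s > j with x_j μ = x_s μ'. Consequently x_j never generates a colon ideal (μ'' ∈ G(I^k) : μ'' >_lex μ) : μ. -/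
/-- `μ` is a product of `k` minimal generators of `B_t(u)` (for `u` given by
the bounds `i`). -/
def IsPowerProd (t d k : ℕ) (i : ℕ → ℕ) (μ : ℕ →₀ ℕ) : Prop :=
  ∃ f : ℕ → ℕ → ℕ, (∀ a, 1 ≤ a → a ≤ k → IsGen t d i (f a)) ∧
    μ = ∑ a ∈ Finset.Icc 1 k, genExp d (f a)

lemma gen_lb {t d : ℕ} {a : ℕ → ℕ} (h : IsTSpread t d a) :
    ∀ l, 1 ≤ l → l ≤ d → (l - 1) * t < a l := by
  intro l
  induction l with
  | zero => omega
  | succ n ih =>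
    intro _ h2
    rcases Nat.eq_zero_or_pos n with hn | hn
    · subst hn
      have := h.1 1 le_rfl (by omega)
      simp; omega
    · have hsp := h.2 (n + 1) (by omega) h2
      simp only [Nat.add_sub_cancel] at hsp
      have ihn := ih hn (by omega)
      have hm : (n - 1) * t + t = n * t := by
        rw [← Nat.succ_mul]; congr 1; omega
      simp only [Nat.add_sub_cancel]
      omega

lemma block_single (lo hi x : ℕ) :
    ∑ m ∈ Finset.Icc lo hi, (Finsupp.single x 1 : ℕ →₀ ℕ) m
      = if x ∈ Finset.Icc lo hi then 1 else 0 := by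
  simp only [Finsupp.single_apply]
  exact Finset.sum_ite_eq (Finset.Icc lo hi) x (fun _ => 1)

lemma block_genExp (t d q : ℕ) (ht : 1 ≤ t) (hq1 : 1 ≤ q) (hq2 : q ≤ d)
    (i : ℕ → ℕ) (hi : ∀ l, i l = l * t) (a : ℕ → ℕ) (ha : IsGen t d i a) :
    ∑ m ∈ Finset.Icc ((q - 1) * t + 1) (q * t), genExp d a m = 1 := by
  have key : ∀ l, l ∈ Finset.Icc 1 d →
      ((a l ∈ Finset.Icc ((q - 1) * t + 1) (q * t)) ↔ l = q) := by
    intro l hl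
    rw [Finset.mem_Icc] at hl ⊢
    constructor
    · rintro ⟨h1, h2⟩
      by_contra hne
      rcases Nat.lt_or_ge l q with hlt | hge
      · have hub := ha.2 l hl.1 hl.2
        rw [hi l] at hub
        have : l * t ≤ (q - 1) * t := Nat.mul_le_mul_right t (by omega)
        omega
      · have hgt : q < l := by omega
        have hlb := gen_lb ha.1 l hl.1 hl.2
        have : q * t ≤ (l - 1) * t := Nat.mul_le_mul_right t (by omega)
        omega
    · rintro rfl
      have hub := ha.2 _ hq1 hq2
      rw [hi] at hub
      have hlb := gen_lb ha.1 _ hq1 hq2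
      omega
  unfold genExp
  simp only [Finset.sum_apply']
  rw [Finset.sum_comm]
  have : ∀ l ∈ Finset.Icc 1 d,
      (∑ m ∈ Finset.Icc ((q - 1) * t + 1) (q * t), (Finsupp.single (a l) 1 : ℕ →₀ ℕ) m)
        = if l = q then 1 else 0 := by
    intro l hl
    rw [block_single, if_congr (key l hl) rfl rfl]
  rw [Finset.sum_congr rfl this, Finset.sum_ite_eq' (Finset.Icc 1 d) q (fun _ => 1)]
  simp [Finset.mem_Icc, hq1, hq2]


lemma block_powerProd (t d k q : ℕ) (ht : 1 ≤ t) (hq1 : 1 ≤ q) (hq2 : q ≤ d)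
    (i : ℕ → ℕ) (hi : ∀ l, i l = l * t) (μ : ℕ →₀ ℕ)
    (hμ : IsPowerProd t d k i μ) :
    ∑ m ∈ Finset.Icc ((q - 1) * t + 1) (q * t), μ m = k := by
  obtain ⟨f, hf, rfl⟩ := hμ
  simp only [Finset.sum_apply']
  rw [Finset.sum_comm]
  have : ∀ a ∈ Finset.Icc 1 k,
      (∑ m ∈ Finset.Icc ((q - 1) * t + 1) (q * t), genExp d (f a) m) = 1 := by
    intro a ha
    rw [Finset.mem_Icc] at ha
    exact block_genExp t d q ht hq1 hq2 i hi (f a) (hf a ha.1 ha.2)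
  rw [Finset.sum_congr rfl this]
  simp

theorem veronese_no_exchange
    (t d k q : ℕ) (ht : 1 ≤ t) (hd : 1 ≤ d) (hk : 1 ≤ k)
    (hq1 : 1 ≤ q) (hq2 : q ≤ d)
    (i : ℕ → ℕ) (hi : ∀ l, i l = l * t) :
    (∀ μ μ' : ℕ →₀ ℕ, IsPowerProd t d k i μ → IsPowerProd t d k i μ' →
      ∀ s, q * t < s →
        Finsupp.single (q * t) 1 + μ ≠ Finsupp.single s 1 + μ') ∧
    (∀ μ : ℕ →₀ ℕ, IsPowerProd t d k i μ →
      ¬ ∃ (μ' : ℕ →₀ ℕ) (s : ℕ), IsPowerProd t d k i μ' ∧ LexGTexp μ' μ ∧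
        Finsupp.single (q * t) 1 + μ = Finsupp.single s 1 + μ') := by
  have hqt : q * t ∈ Finset.Icc ((q - 1) * t + 1) (q * t) := by
    rw [Finset.mem_Icc]
    have : (q - 1) * t + t = q * t := by
      rw [← Nat.succ_mul]; congr 1; omega
    omega
  have part1 : ∀ μ μ' : ℕ →₀ ℕ, IsPowerProd t d k i μ → IsPowerProd t d k i μ' →
      ∀ s, q * t < s →
        Finsupp.single (q * t) 1 + μ ≠ Finsupp.single s 1 + μ' := by
    intro μ μ' hμ hμ' s hs heq
    have h := congrArg (fun ν : ℕ →₀ ℕ =>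
      ∑ m ∈ Finset.Icc ((q - 1) * t + 1) (q * t), ν m) heq
    simp only [Finsupp.add_apply, Finset.sum_add_distrib] at h
    rw [block_single, block_single,
      block_powerProd t d k q ht hq1 hq2 i hi μ hμ,
      block_powerProd t d k q ht hq1 hq2 i hi μ' hμ'] at h
    have hsnot : s ∉ Finset.Icc ((q - 1) * t + 1) (q * t) := by
      rw [Finset.mem_Icc]; omega
    rw [if_pos hqt, if_neg hsnot] at h
    omega
  refine ⟨part1, ?_⟩
  rintro μ hμ ⟨μ', s, hμ', ⟨m, hm, hpre⟩, heq⟩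
  rcases Nat.lt_or_ge (q * t) s with hgt | hle
  · exact part1 μ μ' hμ hμ' s hgt heq
  · have hpt : ∀ p, (Finsupp.single (q * t) 1 : ℕ →₀ ℕ) p + μ p
        = (Finsupp.single s 1 : ℕ →₀ ℕ) p + μ' p := by
      intro p
      have := DFunLike.congr_fun heq p
      simpa [Finsupp.add_apply] using this
    rcases Nat.eq_or_lt_of_le hle with hseq | hslt
    · have := hpt m
      simp only [Finsupp.single_apply, hseq] at this
      omega
    · have hs : μ s = 1 + μ' s := by
        have h2 := hpt s
        rw [Finsupp.single_apply, Finsupp.single_apply,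
          if_neg (by omega : ¬ q * t = s), if_pos rfl] at h2
        omega
      rcases Nat.lt_trichotomy m s with h1 | h2 | h3
      · have h4 := hpt m
        rw [Finsupp.single_apply, Finsupp.single_apply,
          if_neg (by omega : ¬ q * t = m), if_neg (by omega : ¬ s = m)] at h4
        omega
      · subst h2; omega
      · have := hpre s h3
        omega
end
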